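/- arXiv:1811.08030 — 6 statements merged into one kernel-verified Lean document; each statement's English description precedes it below -/
import Mathlib

section
/- Let {v_1,…,v_n} ⊂ S^d be a spherical M-design, let A ∈ ℝ^{d+1}, r > 0, b̄ > 0, and C ∈ ℝ^{d+1}. Set x̄_i = A + r v_i, and let (x_i, b_i) be the center and curvature of the image of the sphere with center x̄_i and curvature b̄ under inversion in the unit sphere centered at C (assume no x̄_i satisfies |x̄_i - C| = 1/b̄, so all images are genuine spheres). Then for every polynomial F on ℝ^{d+1} of degree at most M, the average (1/n) ∑_i F(b_i x_i) equals the integral over v ∈ S^d of F(b(v) x(v)), where b(v), x(v) are the curvature and center of the inverted sphere centered at A + r v. In particular, this average depends only on A, r, b̄, C, F and not on the choice of M-design. -/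
open MeasureTheory

/-- A spherical `M`-design on the unit sphere of `ℝ^D`: a finite point set on the sphere
over which every polynomial of degree at most `M` has the same average as over the
sphere. -/
def IsSphericalDesign (D M n : ℕ) (x : Fin n → EuclideanSpace ℝ (Fin D)) : Prop :=
  (∀ i, ‖x i‖ = 1) ∧
    ∀ F : MvPolynomial (Fin D) ℝ, F.totalDegree ≤ M →
      (1 / (n : ℝ)) * ∑ i, MvPolynomial.eval (x i) F
        = ⨍ v : Metric.sphere (0 : EuclideanSpace ℝ (Fin D)) 1,
            MvPolynomial.eval (v : EuclideanSpace ℝ (Fin D)) F ∂(volume.toSphere)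

lemma my_eval_bind₁ {σ τ R : Type*} [CommSemiring R] (g : τ → R)
    (h : σ → MvPolynomial τ R) (φ : MvPolynomial σ R) :
    MvPolynomial.eval g (MvPolynomial.bind₁ h φ)
      = MvPolynomial.eval (fun i => MvPolynomial.eval g (h i)) φ :=
  MvPolynomial.eval₂Hom_bind₁ _ _ _ _

lemma my_totalDegree_bind₁_le {σ R : Type*} [CommSemiring R]
    (p : σ → MvPolynomial σ R) (hp : ∀ j, (p j).totalDegree ≤ 1)
    (F : MvPolynomial σ R) :
    (MvPolynomial.bind₁ p F).totalDegree ≤ F.totalDegree := by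
  conv_lhs => rw [F.as_sum]
  rw [map_sum]
  refine (MvPolynomial.totalDegree_finset_sum _ _).trans (Finset.sup_le fun m hm => ?_)
  rw [MvPolynomial.bind₁_monomial]
  refine (MvPolynomial.totalDegree_mul _ _).trans ?_
  rw [MvPolynomial.totalDegree_C, zero_add]
  refine le_trans ?_ (MvPolynomial.le_totalDegree hm)
  refine (MvPolynomial.totalDegree_finset_prod _ _).trans ?_
  rw [Finsupp.sum]
  refine Finset.sum_le_sum fun j _ => ?_
  calc ((p j) ^ m j).totalDegree ≤ m j * (p j).totalDegree :=
        MvPolynomial.totalDegree_pow _ _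
    _ ≤ m j * 1 := Nat.mul_le_mul_left _ (hp j)
    _ = m j := mul_one _

lemma my_eval_const {σ R : Type*} [CommSemiring R] (F : MvPolynomial σ R)
    (h : F.totalDegree = 0) (y z : σ → R) :
    MvPolynomial.eval y F = MvPolynomial.eval z F := by
  conv_lhs => rw [F.as_sum]
  conv_rhs => rw [F.as_sum]
  rw [map_sum, map_sum]
  refine Finset.sum_congr rfl fun m hm => ?_
  have hm0 : m = 0 := by
    ext j
    exact (MvPolynomial.totalDegree_eq_zero_iff σ F).1 h m hm j
  subst hm0
  simp

open RealInnerProductSpace in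
lemma my_key {D : ℕ} (A C : EuclideanSpace ℝ (Fin D)) (r bb : ℝ) (hbb : 0 < bb)
    (w : EuclideanSpace ℝ (Fin D)) (hw : ‖w‖ = 1)
    (ht : ‖A + r • w - C‖ ^ 2 - 1 / bb ^ 2 ≠ 0) (j : Fin D) :
    (bb * A j + C j * (bb * (‖A - C‖ ^ 2 + r ^ 2) - 1 / bb - bb) + bb * r * w j
        + ∑ k, C j * (bb * (2 * r) * (A k - C k)) * w k)
      = ((bb * ‖A + r • w - C‖ ^ 2 - 1 / bb) •
          (C + (‖A + r • w - C‖ ^ 2 - 1 / bb ^ 2)⁻¹ • (A + r • w - C))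
            : EuclideanSpace ℝ (Fin D)) j := by
  have hbb' : bb ≠ 0 := ne_of_gt hbb
  have hsplit : A + r • w - C = (A - C) + r • w := by abel
  have hs : ‖A + r • w - C‖ ^ 2 = ‖A - C‖ ^ 2 + 2 * r * ⟪A - C, w⟫ + r ^ 2 := by
    rw [hsplit, norm_add_sq_real, real_inner_smul_right, norm_smul, hw, mul_one,
      Real.norm_eq_abs, sq_abs]
    ring
  have hsum : ∑ k, C j * (bb * (2 * r) * (A k - C k)) * w k
      = C j * (bb * (2 * r)) * ⟪A - C, w⟫ := by
    rw [PiLp.inner_apply]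
    simp only [RCLike.inner_apply, conj_trivial, PiLp.sub_apply]
    rw [Finset.mul_sum]
    exact Finset.sum_congr rfl fun k _ => by ring
  have hco : bb * ‖A + r • w - C‖ ^ 2 - 1 / bb
      = bb * (‖A + r • w - C‖ ^ 2 - 1 / bb ^ 2) := by
    field_simp
  simp only [PiLp.add_apply, PiLp.smul_apply, PiLp.sub_apply, smul_eq_mul]
  rw [hsum, hco]
  have hexp : bb * (‖A + r • w - C‖ ^ 2 - 1 / bb ^ 2) *
      (C j + (‖A + r • w - C‖ ^ 2 - 1 / bb ^ 2)⁻¹ * (A j + r * w j - C j))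
      = bb * (‖A + r • w - C‖ ^ 2 - 1 / bb ^ 2) * C j + bb * (A j + r * w j - C j) := by
    have h1 : (‖A + r • w - C‖ ^ 2 - 1 / bb ^ 2) * (‖A + r • w - C‖ ^ 2 - 1 / bb ^ 2)⁻¹ = 1 :=
      mul_inv_cancel₀ ht
    calc bb * (‖A + r • w - C‖ ^ 2 - 1 / bb ^ 2) *
          (C j + (‖A + r • w - C‖ ^ 2 - 1 / bb ^ 2)⁻¹ * (A j + r * w j - C j))
        = bb * (‖A + r • w - C‖ ^ 2 - 1 / bb ^ 2) * C j +
          ((‖A + r • w - C‖ ^ 2 - 1 / bb ^ 2) * (‖A + r • w - C‖ ^ 2 - 1 / bb ^ 2)⁻¹)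
            * (bb * (A j + r * w j - C j)) := by ring
      _ = _ := by rw [h1, one_mul]
  rw [hexp, hs]
  field_simp
  ring


open RealInnerProductSpace in
lemma my_cone_null_aux {D : ℕ} (c : EuclideanSpace ℝ (Fin D)) (τ : ℝ)
    (h0 : 0 ≤ τ) (h1 : τ < ‖c‖) :
    volume {z : EuclideanSpace ℝ (Fin D) | ⟪c, z⟫ = τ * ‖z‖} = 0 := by
  set K : Set (EuclideanSpace ℝ (Fin D)) := {z | τ * ‖z‖ ≤ ⟪c, z⟫} with hK_def
  have hKconv : Convex ℝ K := by
    intro z hz w hw a b ha hb hab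
    simp only [hK_def, Set.mem_setOf_eq] at hz hw ⊢
    have hn : ‖a • z + b • w‖ ≤ a * ‖z‖ + b * ‖w‖ := by
      refine (norm_add_le _ _).trans ?_
      rw [norm_smul, norm_smul, Real.norm_eq_abs, Real.norm_eq_abs,
        abs_of_nonneg ha, abs_of_nonneg hb]
    have hi : ⟪c, a • z + b • w⟫ = a * ⟪c, z⟫ + b * ⟪c, w⟫ := by
      rw [inner_add_right, real_inner_smul_right, real_inner_smul_right]
    rw [hi]
    calc τ * ‖a • z + b • w‖ ≤ τ * (a * ‖z‖ + b * ‖w‖) :=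
          mul_le_mul_of_nonneg_left hn h0
      _ = a * (τ * ‖z‖) + b * (τ * ‖w‖) := by ring
      _ ≤ a * ⟪c, z⟫ + b * ⟪c, w⟫ := by
          gcongr
  have hsub : {z : EuclideanSpace ℝ (Fin D) | ⟪c, z⟫ = τ * ‖z‖} ⊆ frontier K := by
    intro z hz
    simp only [Set.mem_setOf_eq] at hz
    have hcpos : 0 < ‖c‖ := lt_of_le_of_lt h0 h1
    constructor
    · exact subset_closure (by simp only [hK_def, Set.mem_setOf_eq, hz, le_refl])
    · intro hint
      rw [mem_interior_iff_mem_nhds, Metric.mem_nhds_iff] at hint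
      obtain ⟨ε, hε, hball⟩ := hint
      set δ : ℝ := ε / (2 * (‖c‖ + 1)) with hδ_def
      have hδpos : 0 < δ := by positivity
      have hmem : z - δ • c ∈ K := by
        apply hball
        rw [Metric.mem_ball, dist_eq_norm]
        have : z - δ • c - z = -(δ • c) := by abel
        rw [this, norm_neg, norm_smul, Real.norm_eq_abs, abs_of_pos hδpos]
        calc δ * ‖c‖ < δ * (2 * (‖c‖ + 1)) := by nlinarith
          _ = ε := by
            have : (0:ℝ) < 2 * (‖c‖ + 1) := by positivity
            rw [hδ_def]
            field_simp
      simp only [hK_def, Set.mem_setOf_eq] at hmem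
      have hi : ⟪c, z - δ • c⟫ = ⟪c, z⟫ - δ * ‖c‖ ^ 2 := by
        rw [inner_sub_right, real_inner_smul_right, real_inner_self_eq_norm_sq]
      have hge : ‖z‖ - δ * ‖c‖ ≤ ‖z - δ • c‖ := by
        have := norm_sub_norm_le z (δ • c)
        rw [norm_smul, Real.norm_eq_abs, abs_of_pos hδpos] at this
        linarith
      have h2 := mul_le_mul_of_nonneg_left hge h0
      have h3 : δ * ‖c‖ * τ < δ * ‖c‖ * ‖c‖ :=
        mul_lt_mul_of_pos_left h1 (mul_pos hδpos hcpos)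
      nlinarith [hmem, hi, hz, h2, h3]
  exact measure_mono_null hsub (hKconv.addHaar_frontier volume)

open RealInnerProductSpace in
lemma my_cone_null {D : ℕ} (c : EuclideanSpace ℝ (Fin D)) (τ : ℝ) (hc : c ≠ 0)
    (h : |τ| < ‖c‖ ∨ 2 ≤ D) :
    volume {z : EuclideanSpace ℝ (Fin D) | ⟪c, z⟫ = τ * ‖z‖} = 0 := by
  rcases h with h | hD
  · rcases le_or_gt 0 τ with hτ | hτ
    · exact my_cone_null_aux c τ hτ (lt_of_abs_lt h)
    · have hset : {z : EuclideanSpace ℝ (Fin D) | ⟪c, z⟫ = τ * ‖z‖}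
          = {z : EuclideanSpace ℝ (Fin D) | ⟪-c, z⟫ = (-τ) * ‖z‖} := by
        ext z
        simp only [Set.mem_setOf_eq, inner_neg_left, neg_mul, neg_inj]
      rw [hset]
      refine my_cone_null_aux (-c) (-τ) (by linarith) ?_
      rw [norm_neg]
      calc -τ ≤ |τ| := neg_le_abs τ
        _ < ‖c‖ := h
  · rcases lt_or_ge (|τ|) ‖c‖ with h | hτc
    · rcases le_or_gt 0 τ with hτ | hτ
      · exact my_cone_null_aux c τ hτ (lt_of_abs_lt h)
      · have hset : {z : EuclideanSpace ℝ (Fin D) | ⟪c, z⟫ = τ * ‖z‖}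
            = {z : EuclideanSpace ℝ (Fin D) | ⟪-c, z⟫ = (-τ) * ‖z‖} := by
          ext z
          simp only [Set.mem_setOf_eq, inner_neg_left, neg_mul, neg_inj]
        rw [hset]
        refine my_cone_null_aux (-c) (-τ) (by linarith) ?_
        rw [norm_neg]
        calc -τ ≤ |τ| := neg_le_abs τ
          _ < ‖c‖ := h
    · -- Cauchy–Schwarz equality case: the set is inside the line spanned by c
      have hcpos : 0 < ‖c‖ := norm_pos_iff.2 hc
      have hsub : {z : EuclideanSpace ℝ (Fin D) | ⟪c, z⟫ = τ * ‖z‖}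
          ⊆ (Submodule.span ℝ {c} : Submodule ℝ (EuclideanSpace ℝ (Fin D))) := by
        intro z hz
        simp only [Set.mem_setOf_eq] at hz
        have hcs : |⟪c, z⟫| ≤ ‖c‖ * ‖z‖ := abs_real_inner_le_norm c z
        have habs : |⟪c, z⟫| = |τ| * ‖z‖ := by
          rw [hz, abs_mul, abs_of_nonneg (norm_nonneg z)]
        have heq : |⟪c, z⟫| = ‖c‖ * ‖z‖ := by
          refine le_antisymm hcs ?_
          rw [habs]
          exact mul_le_mul_of_nonneg_right hτc (norm_nonneg z)
        rcases le_or_gt 0 (⟪c, z⟫ : ℝ) with hsgn | hsgn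
        · have : ⟪c, z⟫ = ‖c‖ * ‖z‖ := by rwa [abs_of_nonneg hsgn] at heq
          have hdep := inner_eq_norm_mul_iff_real.1 this
          rw [SetLike.mem_coe, Submodule.mem_span_singleton]
          exact ⟨‖c‖⁻¹ * ‖z‖, by
            rw [mul_smul, hdep, smul_smul, inv_mul_cancel₀ (ne_of_gt hcpos), one_smul]⟩
        · have : ⟪-c, z⟫ = ‖-c‖ * ‖z‖ := by
            rw [inner_neg_left, norm_neg]
            rw [abs_of_neg hsgn] at heq
            linarith
          have hdep := inner_eq_norm_mul_iff_real.1 this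
          rw [norm_neg] at hdep
          rw [SetLike.mem_coe, Submodule.mem_span_singleton]
          refine ⟨-(‖c‖⁻¹ * ‖z‖), ?_⟩
          have h5 : ‖z‖ • c = -(‖c‖ • z) := by
            rw [smul_neg] at hdep
            rw [← hdep, neg_neg]
          rw [neg_smul, mul_smul, h5, smul_neg, neg_neg, smul_smul,
            inv_mul_cancel₀ (ne_of_gt hcpos), one_smul]
      refine measure_mono_null hsub (Measure.addHaar_submodule volume _ ?_)
      intro htop
      have h1 : Module.finrank ℝ (Submodule.span ℝ ({c} : Set (EuclideanSpace ℝ (Fin D)))) = 1 :=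
        finrank_span_singleton hc
      rw [htop, finrank_top] at h1
      rw [finrank_euclideanSpace_fin] at h1
      omega

open RealInnerProductSpace in
lemma my_sphere_slice_null {D : ℕ} (c : EuclideanSpace ℝ (Fin D)) (τ : ℝ) (hc : c ≠ 0)
    (h : |τ| < ‖c‖ ∨ 2 ≤ D) :
    volume.toSphere {w : Metric.sphere (0 : EuclideanSpace ℝ (Fin D)) 1 |
      ⟪c, (w : EuclideanSpace ℝ (Fin D))⟫ = τ} = 0 := by
  have hcont : Continuous fun w : Metric.sphere (0 : EuclideanSpace ℝ (Fin D)) 1 =>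
      (⟪c, (w : EuclideanSpace ℝ (Fin D))⟫ : ℝ) :=
    Continuous.inner continuous_const continuous_subtype_val
  have hms : MeasurableSet {w : Metric.sphere (0 : EuclideanSpace ℝ (Fin D)) 1 |
      ⟪c, (w : EuclideanSpace ℝ (Fin D))⟫ = τ} :=
    (isClosed_eq hcont continuous_const).measurableSet
  rw [Measure.toSphere_apply' _ hms, mul_eq_zero]
  right
  refine measure_mono_null ?_ (my_cone_null c τ hc h)
  rintro z hz
  rw [Set.mem_smul] at hz
  obtain ⟨t, ht, y, hy, rfl⟩ := hz
  obtain ⟨w, hw, rfl⟩ := hy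
  simp only [Set.mem_setOf_eq] at hw
  have hw1 : ‖(w : EuclideanSpace ℝ (Fin D))‖ = 1 := mem_sphere_zero_iff_norm.1 w.2
  simp only [Set.mem_setOf_eq]
  rw [real_inner_smul_right, norm_smul, hw, hw1, Real.norm_eq_abs,
    abs_of_pos ht.1, mul_one, mul_comm]
open RealInnerProductSpace

set_option maxHeartbeats 1000000 in
/-- **Theorem 2.1.** Take congruent spheres of curvature `bb` centered at the points
`A + r • v_i` of a scaled spherical `M`-design, and invert them in the unit sphere
centered at `C`; let `(x_i, b_i)` be the centers and curvatures of the images. Then the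
average of `F(b_i • x_i)` over the design equals the corresponding average over the whole
sphere, for every polynomial `F` of degree at most `M`; in particular it does not depend
on the choice of design. -/
theorem design_average_inverted_spheres {d M n : ℕ}
    (v : Fin n → EuclideanSpace ℝ (Fin (d + 1)))
    (hdesign : IsSphericalDesign (d + 1) M n v) (hn : 0 < n)
    (A C : EuclideanSpace ℝ (Fin (d + 1))) (r bb : ℝ) (hr : 0 < r) (hbb : 0 < bb)
    (hreg : ∀ i, ‖(A + r • v i) - C‖ ≠ 1 / bb)
    (b : Fin n → ℝ) (hb : ∀ i, b i = bb * ‖(A + r • v i) - C‖ ^ 2 - 1 / bb)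
    (x : Fin n → EuclideanSpace ℝ (Fin (d + 1)))
    (hx : ∀ i, x i = C + (‖(A + r • v i) - C‖ ^ 2 - 1 / bb ^ 2)⁻¹ • ((A + r • v i) - C))
    (F : MvPolynomial (Fin (d + 1)) ℝ) (hF : F.totalDegree ≤ M) :
    (1 / (n : ℝ)) * ∑ i, MvPolynomial.eval (b i • x i) F
      = ⨍ w : Metric.sphere (0 : EuclideanSpace ℝ (Fin (d + 1))) 1,
          MvPolynomial.eval
            (((bb * ‖(A + r • (w : EuclideanSpace ℝ (Fin (d + 1)))) - C‖ ^ 2 - 1 / bb) •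
              (C + (‖(A + r • (w : EuclideanSpace ℝ (Fin (d + 1)))) - C‖ ^ 2 - 1 / bb ^ 2)⁻¹ •
                ((A + r • (w : EuclideanSpace ℝ (Fin (d + 1)))) - C))) : EuclideanSpace ℝ (Fin (d + 1))) F
          ∂(volume.toSphere) := by
  classical
  obtain ⟨hnorm, havg⟩ := hdesign
  set p : Fin (d + 1) → MvPolynomial (Fin (d + 1)) ℝ := fun j =>
    MvPolynomial.C (bb * A j + C j * (bb * (‖A - C‖ ^ 2 + r ^ 2) - 1 / bb - bb))
      + MvPolynomial.C (bb * r) * MvPolynomial.X j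
      + ∑ k, MvPolynomial.C (C j * (bb * (2 * r) * (A k - C k))) * MvPolynomial.X k
    with hp_def
  have hpdeg : ∀ j, (p j).totalDegree ≤ 1 := by
    intro j
    rw [hp_def]
    refine (MvPolynomial.totalDegree_add _ _).trans
      (max_le ((MvPolynomial.totalDegree_add _ _).trans (max_le ?_ ?_)) ?_)
    · rw [MvPolynomial.totalDegree_C]
      omega
    · refine (MvPolynomial.totalDegree_mul _ _).trans ?_
      rw [MvPolynomial.totalDegree_C, MvPolynomial.totalDegree_X]
    · refine (MvPolynomial.totalDegree_finset_sum _ _).trans (Finset.sup_le fun k _ => ?_)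
      refine (MvPolynomial.totalDegree_mul _ _).trans ?_
      rw [MvPolynomial.totalDegree_C, MvPolynomial.totalDegree_X]
  set G := MvPolynomial.bind₁ p F with hG_def
  have hG : G.totalDegree ≤ M := (my_totalDegree_bind₁_le p hpdeg F).trans hF
  have hpeval : ∀ (w : EuclideanSpace ℝ (Fin (d + 1))) (j : Fin (d + 1)),
      MvPolynomial.eval w (p j)
        = bb * A j + C j * (bb * (‖A - C‖ ^ 2 + r ^ 2) - 1 / bb - bb)
          + bb * r * w j + ∑ k, C j * (bb * (2 * r) * (A k - C k)) * w k := by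
    intro w j
    simp [hp_def]
  have hGeval : ∀ w : EuclideanSpace ℝ (Fin (d + 1)), ‖w‖ = 1 →
      ‖A + r • w - C‖ ^ 2 - 1 / bb ^ 2 ≠ 0 →
      MvPolynomial.eval w G =
        MvPolynomial.eval ((bb * ‖A + r • w - C‖ ^ 2 - 1 / bb) •
          (C + (‖A + r • w - C‖ ^ 2 - 1 / bb ^ 2)⁻¹ • (A + r • w - C))
            : EuclideanSpace ℝ (Fin (d + 1))) F := by
    intro w hw ht
    have hfun : (fun j => MvPolynomial.eval w (p j))
        = fun j => ((bb * ‖A + r • w - C‖ ^ 2 - 1 / bb) •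
          (C + (‖A + r • w - C‖ ^ 2 - 1 / bb ^ 2)⁻¹ • (A + r • w - C))
            : EuclideanSpace ℝ (Fin (d + 1))) j :=
      funext fun j => (hpeval w j).trans (my_key A C r bb hbb w hw ht j)
    rw [hG_def, my_eval_bind₁, hfun]
  have hsq : ∀ i : Fin n, ‖A + r • v i - C‖ ^ 2 - 1 / bb ^ 2 ≠ 0 := by
    intro i h
    apply hreg i
    have h1 : (‖A + r • v i - C‖ - 1 / bb) * (‖A + r • v i - C‖ + 1 / bb) = 0 := by
      have hpow : (1 : ℝ) / bb ^ 2 = (1 / bb) ^ 2 := by rw [div_pow, one_pow]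
      rw [hpow] at h
      linear_combination h
    rcases mul_eq_zero.1 h1 with h2 | h2
    · exact sub_eq_zero.1 h2
    · have hpos : (0 : ℝ) < 1 / bb := by positivity
      have := norm_nonneg (A + r • v i - C)
      linarith
  have hsum : ∀ i, MvPolynomial.eval (b i • x i) F = MvPolynomial.eval (v i) G := by
    intro i
    rw [hb i, hx i]
    exact (hGeval (v i) (hnorm i) (hsq i)).symm
  set cc : EuclideanSpace ℝ (Fin (d + 1)) := (2 * r) • (A - C) with hcc_def
  set τ : ℝ := 1 / bb ^ 2 - ‖A - C‖ ^ 2 - r ^ 2 with hτ_def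
  have hrel : ∀ w : EuclideanSpace ℝ (Fin (d + 1)), ‖w‖ = 1 →
      ‖A + r • w - C‖ ^ 2 - 1 / bb ^ 2 = ⟪cc, w⟫ - τ := by
    intro w hw
    have hsplit : A + r • w - C = (A - C) + r • w := by abel
    rw [hsplit, norm_add_sq_real, real_inner_smul_right, norm_smul, hw, mul_one,
      Real.norm_eq_abs, sq_abs, hcc_def, real_inner_smul_left, hτ_def]
    ring
  have hkey2 : ∀ ww : Metric.sphere (0 : EuclideanSpace ℝ (Fin (d + 1))) 1,
      ⟪cc, (ww : EuclideanSpace ℝ (Fin (d + 1)))⟫ ≠ τ →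
      MvPolynomial.eval ((ww : EuclideanSpace ℝ (Fin (d + 1)))) G =
        MvPolynomial.eval
          (((bb * ‖(A + r • (ww : EuclideanSpace ℝ (Fin (d + 1)))) - C‖ ^ 2 - 1 / bb) •
            (C + (‖(A + r • (ww : EuclideanSpace ℝ (Fin (d + 1)))) - C‖ ^ 2 - 1 / bb ^ 2)⁻¹ •
              ((A + r • (ww : EuclideanSpace ℝ (Fin (d + 1)))) - C))) : EuclideanSpace ℝ (Fin (d + 1))) F := by
    intro ww hww
    refine hGeval _ (mem_sphere_zero_iff_norm.1 ww.2) ?_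
    rw [hrel _ (mem_sphere_zero_iff_norm.1 ww.2)]
    exact sub_ne_zero_of_ne hww
  have hdisj : volume.toSphere {ww : Metric.sphere (0 : EuclideanSpace ℝ (Fin (d + 1))) 1 |
        ⟪cc, (ww : EuclideanSpace ℝ (Fin (d + 1)))⟫ = τ} = 0
      ∨ (∀ y z : Fin (d + 1) → ℝ, MvPolynomial.eval y F = MvPolynomial.eval z F)
      ∨ ∀ ww : Metric.sphere (0 : EuclideanSpace ℝ (Fin (d + 1))) 1,
          ⟪cc, (ww : EuclideanSpace ℝ (Fin (d + 1)))⟫ ≠ τ := by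
    by_cases hA : A = C
    · have hcc0 : cc = 0 := by rw [hcc_def, hA, sub_self, smul_zero]
      by_cases hτ0 : τ = 0
      · exfalso
        have i0 : Fin n := ⟨0, hn⟩
        apply hsq i0
        rw [hrel (v i0) (hnorm i0), hcc0, inner_zero_left, hτ0, sub_zero]
      · right; right
        intro ww
        rw [hcc0, inner_zero_left]
        exact fun h => hτ0 h.symm
    · have hcc0 : cc ≠ 0 := by
        rw [hcc_def]
        exact smul_ne_zero (by positivity) (sub_ne_zero_of_ne hA)
      by_cases hτc : |τ| < ‖cc‖
      · exact Or.inl (my_sphere_slice_null cc τ hcc0 (Or.inl hτc))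
      · by_cases hd1 : 1 ≤ d
        · exact Or.inl (my_sphere_slice_null cc τ hcc0 (Or.inr (by omega)))
        · by_cases hF0 : F.totalDegree = 0
          · exact Or.inr (Or.inl fun y z => my_eval_const F hF0 y z)
          · left
            have hd0 : d = 0 := by omega
            subst hd0
            have hM1 : 1 ≤ M := le_trans (Nat.one_le_iff_ne_zero.2 hF0) hF
            have hinner1 : ∀ u w : EuclideanSpace ℝ (Fin (0 + 1)), ⟪u, w⟫ = u 0 * w 0 := by
              intro u w
              rw [PiLp.inner_apply]
              simp [RCLike.inner_apply]
              ring
            have hcc00 : cc 0 ≠ 0 := by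
              intro h0
              apply hcc0
              refine PiLp.ext fun i => ?_
              have hi0 : i = 0 := Fin.ext (by omega)
              rw [hi0]
              simpa using h0
            have hnorm1 : ∀ w : EuclideanSpace ℝ (Fin (0 + 1)), ‖w‖ = 1 → |w 0| = 1 := by
              intro w hw
              rw [EuclideanSpace.norm_eq] at hw
              simpa [Real.sqrt_sq_eq_abs] using hw
            set ε : ℝ := τ / cc 0 with hε_def
            have hbadi : ∀ i, v i 0 ≠ ε := by
              intro i he
              apply hsq i
              rw [hrel (v i) (hnorm i), hinner1]
              rw [he, hε_def]
              field_simp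
              ring
            by_cases hε1 : |ε| = 1
            · have hε2 : ε = 1 ∨ ε = -1 := (abs_eq (by norm_num)).1 hε1
              have hvi : ∀ i, v i 0 = -ε := by
                intro i
                have h1 : |v i 0| = 1 := hnorm1 (v i) (hnorm i)
                rcases (abs_eq (by norm_num : (0:ℝ) ≤ 1)).1 h1 with h | h <;>
                    rcases hε2 with h' | h' <;>
                  first
                  | exact absurd (h.trans h'.symm) (hbadi i)
                  | (rw [h, h']; norm_num)
                  | rw [h, h']
              have hε2' : ε ^ 2 = 1 := by rcases hε2 with h | h <;> rw [h] <;> norm_num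
              set q : MvPolynomial (Fin (0 + 1)) ℝ :=
                MvPolynomial.C ε * MvPolynomial.X 0 + 1 with hq_def
              have hqdeg : q.totalDegree ≤ M := by
                refine le_trans ?_ hM1
                rw [hq_def]
                refine (MvPolynomial.totalDegree_add _ _).trans (max_le ?_ ?_)
                · refine (MvPolynomial.totalDegree_mul _ _).trans ?_
                  rw [MvPolynomial.totalDegree_C, MvPolynomial.totalDegree_X]
                · rw [MvPolynomial.totalDegree_one]
                  omega
              have hqeval : ∀ y : EuclideanSpace ℝ (Fin (0 + 1)),
                  MvPolynomial.eval y q = ε * y 0 + 1 := by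
                intro y
                rw [hq_def]
                simp
              have hdq := havg q hqdeg
              have hlhs : (1 / (n : ℝ)) * ∑ i, MvPolynomial.eval (v i) q = 0 := by
                rw [Finset.sum_eq_zero, mul_zero]
                intro i _
                rw [hqeval, hvi i]
                linear_combination -hε2'
              rw [hlhs] at hdq
              by_cases hμ0 : volume.toSphere
                  (Set.univ : Set (Metric.sphere (0 : EuclideanSpace ℝ (Fin (0 + 1))) 1)) = 0
              · exact measure_mono_null (Set.subset_univ _) hμ0
              · have htoR : (volume.toSphere
                    (Set.univ : Set (Metric.sphere (0 : EuclideanSpace ℝ (Fin (0 + 1))) 1))).toReal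
                      ≠ 0 :=
                  ENNReal.toReal_ne_zero.2 ⟨hμ0, measure_ne_top _ _⟩
                rw [average_eq, smul_eq_mul] at hdq
                have hint0 : ∫ ww : Metric.sphere (0 : EuclideanSpace ℝ (Fin (0 + 1))) 1,
                    MvPolynomial.eval ((ww : EuclideanSpace ℝ (Fin (0 + 1)))) q
                      ∂volume.toSphere = 0 := by
                  rcases mul_eq_zero.1 hdq.symm with h | h
                  · exact absurd h (inv_ne_zero htoR)
                  · exact h
                have hfun2 : (fun ww : Metric.sphere (0 : EuclideanSpace ℝ (Fin (0 + 1))) 1 =>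
                    MvPolynomial.eval ((ww : EuclideanSpace ℝ (Fin (0 + 1)))) q)
                      = fun ww : Metric.sphere (0 : EuclideanSpace ℝ (Fin (0 + 1))) 1 =>
                        ε * (ww : EuclideanSpace ℝ (Fin (0 + 1))) 0 + 1 := by
                  funext ww
                  exact hqeval _
                have hcont : Continuous fun ww : Metric.sphere
                    (0 : EuclideanSpace ℝ (Fin (0 + 1))) 1 =>
                    MvPolynomial.eval ((ww : EuclideanSpace ℝ (Fin (0 + 1)))) q := by
                  rw [hfun2]
                  exact (continuous_const.mul ((EuclideanSpace.proj
                    (0 : Fin (0 + 1))).continuous.comp continuous_subtype_val)).add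
                    continuous_const
                have hintg : Integrable (fun ww : Metric.sphere
                    (0 : EuclideanSpace ℝ (Fin (0 + 1))) 1 =>
                    MvPolynomial.eval ((ww : EuclideanSpace ℝ (Fin (0 + 1)))) q)
                      volume.toSphere := by
                  refine hcont.integrable_of_hasCompactSupport ?_
                  exact IsCompact.of_isClosed_subset isCompact_univ (isClosed_tsupport _)
                    (Set.subset_univ _)
                have hnn : 0 ≤ fun ww : Metric.sphere (0 : EuclideanSpace ℝ (Fin (0 + 1))) 1 =>
                    MvPolynomial.eval ((ww : EuclideanSpace ℝ (Fin (0 + 1)))) q := by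
                  intro ww
                  simp only [Pi.zero_apply, hqeval]
                  have h1 : |(ww : EuclideanSpace ℝ (Fin (0 + 1))) 0| = 1 :=
                    hnorm1 _ (mem_sphere_zero_iff_norm.1 ww.2)
                  have h2 := neg_abs_le (ε * (ww : EuclideanSpace ℝ (Fin (0 + 1))) 0)
                  rw [abs_mul, hε1, h1, one_mul] at h2
                  linarith
                have hae0 := (integral_eq_zero_iff_of_nonneg hnn hintg).1 hint0
                rw [Filter.EventuallyEq, ae_iff] at hae0
                refine measure_mono_null ?_ hae0
                intro ww hww
                simp only [Set.mem_setOf_eq] at hww ⊢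
                rw [hinner1] at hww
                have hw0 : (ww : EuclideanSpace ℝ (Fin (0 + 1))) 0 = ε := by
                  rw [hε_def, eq_div_iff hcc00]
                  linear_combination hww
                rw [Pi.zero_apply, hqeval, hw0]
                intro h
                nlinarith [hε2']
            · have hempty : {ww : Metric.sphere (0 : EuclideanSpace ℝ (Fin (0 + 1))) 1 |
                  ⟪cc, (ww : EuclideanSpace ℝ (Fin (0 + 1)))⟫ = τ} = ∅ := by
                rw [Set.eq_empty_iff_forall_notMem]
                intro ww hww
                simp only [Set.mem_setOf_eq] at hww
                rw [hinner1] at hww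
                apply hε1
                have hw0 : (ww : EuclideanSpace ℝ (Fin (0 + 1))) 0 = ε := by
                  rw [hε_def, eq_div_iff hcc00]
                  linear_combination hww
                rw [← hw0]
                exact hnorm1 _ (mem_sphere_zero_iff_norm.1 ww.2)
              rw [hempty, measure_empty]
  have hae : (fun ww : Metric.sphere (0 : EuclideanSpace ℝ (Fin (d + 1))) 1 =>
        MvPolynomial.eval ((ww : EuclideanSpace ℝ (Fin (d + 1)))) G)
      =ᵐ[volume.toSphere]
      fun ww : Metric.sphere (0 : EuclideanSpace ℝ (Fin (d + 1))) 1 =>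
        MvPolynomial.eval
          (((bb * ‖(A + r • (ww : EuclideanSpace ℝ (Fin (d + 1)))) - C‖ ^ 2 - 1 / bb) •
            (C + (‖(A + r • (ww : EuclideanSpace ℝ (Fin (d + 1)))) - C‖ ^ 2 - 1 / bb ^ 2)⁻¹ •
              ((A + r • (ww : EuclideanSpace ℝ (Fin (d + 1)))) - C))) : EuclideanSpace ℝ (Fin (d + 1))) F := by
    rcases hdisj with h0 | hconst | hall
    · rw [Filter.EventuallyEq, ae_iff]
      refine measure_mono_null ?_ h0
      intro ww hww
      simp only [Set.mem_setOf_eq] at hww ⊢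
      by_contra hc2
      exact hww (hkey2 ww hc2)
    · refine Filter.Eventually.of_forall fun ww => ?_
      simp only [hG_def, my_eval_bind₁]
      exact hconst _ _
    · exact Filter.Eventually.of_forall fun ww => hkey2 ww (hall ww)
  calc (1 / (n : ℝ)) * ∑ i, MvPolynomial.eval (b i • x i) F
      = (1 / (n : ℝ)) * ∑ i, MvPolynomial.eval (v i) G := by
        rw [Finset.sum_congr rfl fun i _ => hsum i]
    _ = ⨍ ww : Metric.sphere (0 : EuclideanSpace ℝ (Fin (d + 1))) 1,
          MvPolynomial.eval ((ww : EuclideanSpace ℝ (Fin (d + 1)))) G ∂(volume.toSphere) :=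
        havg G hG
    _ = _ := average_congr hae
end

section
/- With the setup of the previous theorem (congruent spheres of curvature b̄ centered at the points A + r v_i of a scaled spherical M-design, inverted in the unit sphere centered at C, yielding curvatures b_i), for every m ≤ M the average (1/n) ∑_i b_i^m depends only on A, r, b̄, C, m and not on the particular M-design: it equals the integral over v ∈ S^d of (b̄ |A + r v - C|^2 - 1/b̄)^m. -/
open MeasureTheory

lemma key_eval {D : ℕ} (A C : EuclideanSpace ℝ (Fin D)) (r bb : ℝ)
    (x : EuclideanSpace ℝ (Fin D)) (hx : ‖x‖ = 1) :
    MvPolynomial.eval x ((MvPolynomial.C (bb * (‖A - C‖ ^ 2 + r ^ 2) - 1 / bb) +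
      ∑ j, MvPolynomial.C (2 * r * bb * (A j - C j)) * MvPolynomial.X j : MvPolynomial (Fin D) ℝ))
      = bb * ‖(A + r • x) - C‖ ^ 2 - 1 / bb := by
  have h1 : (A + r • x) - C = (A - C) + r • x := by abel
  rw [h1, norm_add_sq_real, real_inner_smul_right, norm_smul, hx]
  have h2 : (inner ℝ (A - C) x : ℝ) = ∑ j, (A j - C j) * x j := by
    rw [PiLp.inner_apply]
    simp [PiLp.sub_apply, mul_comm]
  simp only [map_add, map_sum, map_mul, MvPolynomial.eval_C, MvPolynomial.eval_X, h2]
  simp only [map_add, map_sum, map_mul, MvPolynomial.eval_C, MvPolynomial.eval_X, h2,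
    Real.norm_eq_abs, mul_one, sq_abs]
  rw [show (∑ j, (2 * r * bb * (A j - C j)) * x j) = bb * (2 * (r * ∑ j, (A j - C j) * x j))
    from by rw [Finset.mul_sum, Finset.mul_sum, Finset.mul_sum];
            exact Finset.sum_congr rfl fun j _ => by ring]
  ring


/-- **Corollary 2.4.** For congruent spheres of curvature `bb` centered at the points
`A + r • v_i` of a scaled spherical `M`-design, inverted in the unit sphere centered at
`C`, the `m`-th power-sum average of the resulting curvatures `b_i`, for `m ≤ M`,
equals the corresponding spherical average, hence depends only on `A, r, bb, C, m`
and not on the particular design. -/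
theorem design_average_inverted_curvature_powers {d M n : ℕ}
    (v : Fin n → EuclideanSpace ℝ (Fin (d + 1)))
    (hdesign : IsSphericalDesign (d + 1) M n v) (hn : 0 < n)
    (A C : EuclideanSpace ℝ (Fin (d + 1))) (r bb : ℝ) (hr : 0 < r) (hbb : 0 < bb)
    (hreg : ∀ i, ‖(A + r • v i) - C‖ ≠ 1 / bb)
    (b : Fin n → ℝ) (hb : ∀ i, b i = bb * ‖(A + r • v i) - C‖ ^ 2 - 1 / bb)
    (m : ℕ) (hm : m ≤ M) :
    (1 / (n : ℝ)) * ∑ i, (b i) ^ m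
      = ⨍ w : Metric.sphere (0 : EuclideanSpace ℝ (Fin (d + 1))) 1,
          (bb * ‖(A + r • (w : EuclideanSpace ℝ (Fin (d + 1)))) - C‖ ^ 2 - 1 / bb) ^ m
          ∂(volume.toSphere) := by
  set L : MvPolynomial (Fin (d + 1)) ℝ :=
    MvPolynomial.C (bb * (‖A - C‖ ^ 2 + r ^ 2) - 1 / bb) +
      ∑ j, MvPolynomial.C (2 * r * bb * (A j - C j)) * MvPolynomial.X j with hL
  have hLdeg : L.totalDegree ≤ 1 := by
    refine le_trans (MvPolynomial.totalDegree_add _ _) ?_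
    rw [max_le_iff]
    constructor
    · simp only [MvPolynomial.totalDegree_C]; exact Nat.zero_le 1
    · refine le_trans (MvPolynomial.totalDegree_finset_sum _ _) ?_
      refine Finset.sup_le fun j _ => ?_
      refine le_trans (MvPolynomial.totalDegree_mul _ _) ?_
      simp only [MvPolynomial.totalDegree_C, MvPolynomial.totalDegree_X]; omega
  have hFdeg : (L ^ m).totalDegree ≤ M := by
    refine le_trans (MvPolynomial.totalDegree_pow _ _) ?_
    calc m * L.totalDegree ≤ m * 1 := Nat.mul_le_mul_left m hLdeg
    _ = m := Nat.mul_one m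
    _ ≤ M := hm
  have key := hdesign.2 (L ^ m) hFdeg
  have hLHS : ∀ i, MvPolynomial.eval (v i) (L ^ m) = (b i) ^ m := fun i => by
    rw [map_pow, hL, key_eval A C r bb (v i) (hdesign.1 i), hb]
  have hRHS : (fun w : Metric.sphere (0 : EuclideanSpace ℝ (Fin (d + 1))) 1 =>
      MvPolynomial.eval (w : EuclideanSpace ℝ (Fin (d + 1))) (L ^ m))
      = fun (w : Metric.sphere (0 : EuclideanSpace ℝ (Fin (d + 1))) 1) => (bb * ‖(A + r • (w : EuclideanSpace ℝ (Fin (d + 1)))) - C‖ ^ 2 - 1 / bb) ^ m := by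
    funext w
    rw [map_pow, hL, key_eval A C r bb _ (by simpa using mem_sphere_zero_iff_norm.mp w.2)]
  rw [← hRHS, ← key]
  simp_rw [hLHS]
end

section
/- Let a sphere in ℝ^d have center x and curvature b̄ ≠ 0. Its preimage under stereographic projection from the South Pole to S^d is a sphere on S^d whose spherical curvature cot α satisfies cot α = (b̄^2 - 1)/(2 b̄) + (b̄/2) |x|^2. -/
open Real

/-- Stereographic projection of `S^d ⊂ ℝ^{d+1}` from the South Pole `(-1,0,…,0)` to the
hyperplane `y₀ = 0`. -/
noncomputable def stereoProj {d : ℕ} (y : EuclideanSpace ℝ (Fin (d + 1))) :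
    EuclideanSpace ℝ (Fin d) :=
  WithLp.toLp 2 (fun i : Fin d => y i.succ / (1 + y 0))

lemma esp_norm_sq {n : ℕ} (v : EuclideanSpace ℝ (Fin n)) : ‖v‖ ^ 2 = ∑ i, v i ^ 2 := by
  rw [← real_inner_self_eq_norm_sq, PiLp.inner_apply]
  simp [RCLike.inner_apply]

lemma esp_inner {n : ℕ} (v w : EuclideanSpace ℝ (Fin n)) :
    (inner ℝ v w : ℝ) = ∑ i, v i * w i := by
  rw [PiLp.inner_apply]; simp [RCLike.inner_apply]
  exact Finset.sum_congr rfl fun i _ => mul_comm _ _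

lemma esp_norm_eq_of_sq {n : ℕ} (v : EuclideanSpace ℝ (Fin n)) {r : ℝ} (hr : 0 ≤ r)
    (h : ‖v‖ ^ 2 = r ^ 2) : ‖v‖ = r := by
  nlinarith [norm_nonneg v]

set_option maxHeartbeats 2000000 in
/-- **Equation (7).** The preimage under stereographic projection of the sphere in `ℝ^d`
with center `x` and curvature `bb ≠ 0` (radius `1/|bb|`) is a sphere on `S^d`
(an intersection `{y ∈ S^d : p ⬝ y = cos α}`) whose spherical curvature satisfies
`cot α = (bb² - 1)/(2 bb) + (bb/2) |x|²`. -/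
theorem stereoProj_preimage_curvature {d : ℕ} (x : EuclideanSpace ℝ (Fin d))
    (bb : ℝ) (hbb : bb ≠ 0) :
    ∃ (p : EuclideanSpace ℝ (Fin (d + 1))) (α : ℝ), ‖p‖ = 1 ∧ 0 < α ∧ α < Real.pi ∧
      stereoProj ''
          {y : EuclideanSpace ℝ (Fin (d + 1)) |
            ‖y‖ = 1 ∧ inner ℝ p y = (Real.cos α : ℝ)}
        = Metric.sphere x (1 / |bb|) ∧
      Real.cos α / Real.sin α = (bb ^ 2 - 1) / (2 * bb) + (bb / 2) * ‖x‖ ^ 2 := by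
  have habs : (0:ℝ) < |bb| := abs_pos.mpr hbb
  have habsne : |bb| ≠ 0 := ne_of_gt habs
  set A : ℝ := ‖x‖ ^ 2 with hAdef
  have hA0 : 0 ≤ A := sq_nonneg _
  set R : ℝ := (bb⁻¹) ^ 2 with hRdef
  have hR0 : (0:ℝ) < R := by positivity
  have hRbb : R * bb ^ 2 = 1 := by rw [hRdef]; field_simp
  have hRval : (1 / |bb|) ^ 2 = R := by
    rw [hRdef, div_pow, one_pow, sq_abs]
    field_simp
  clear_value A R
  set D : ℝ := Real.sqrt ((1 + A - R) ^ 2 + 4 * R) with hDdef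
  have hD0 : (0:ℝ) < D := Real.sqrt_pos.mpr (by positivity)
  have hDne : D ≠ 0 := ne_of_gt hD0
  have hDsq : D ^ 2 = (1 + A - R) ^ 2 + 4 * R := Real.sq_sqrt (by positivity)
  clear_value D
  set k : ℝ := bb / (|bb| * D) with hkdef
  have hk0 : k ≠ 0 := by
    rw [hkdef]; exact div_ne_zero hbb (by positivity)
  have hk2 : k ^ 2 * D ^ 2 = 1 := by
    rw [hkdef, div_pow, mul_pow, sq_abs]
    field_simp
  have hkb : k * (|bb| * D) = bb := by rw [hkdef]; field_simp
  clear_value k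
  have hk2pos : 0 < k ^ 2 := lt_of_le_of_ne (sq_nonneg k) (Ne.symm (pow_ne_zero 2 hk0))
  have hkey : (k * (1 + A - R)) ^ 2 = 1 - 4 * (R * k ^ 2) := by
    linear_combination hk2 - k ^ 2 * hDsq
  have hcsq : (k * (1 + A - R)) ^ 2 < 1 := by nlinarith [mul_pos hR0 hk2pos]
  have hc1 : -1 < k * (1 + A - R) := by nlinarith [sq_nonneg (k * (1 + A - R) + 1)]
  have hc2 : k * (1 + A - R) < 1 := by nlinarith [sq_nonneg (k * (1 + A - R) - 1)]
  set p : EuclideanSpace ℝ (Fin (d + 1)) :=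
    WithLp.toLp 2 (fun i => Fin.cases (k * (1 - A + R)) (fun j => 2 * k * x j) i :
      ∀ _ : Fin (d + 1), ℝ) with hpdef
  have hp0 : p 0 = k * (1 - A + R) := rfl
  have hps : ∀ j : Fin d, p j.succ = 2 * k * x j := fun j => rfl
  set α : ℝ := Real.arccos (k * (1 + A - R)) with hαdef
  have hcos : Real.cos α = k * (1 + A - R) := Real.cos_arccos hc1.le hc2.le
  have hsin : Real.sin α = 2 / (|bb| * D) := by
    rw [hαdef, Real.sin_arccos]
    have h1 : 1 - (k * (1 + A - R)) ^ 2 = (2 / (|bb| * D)) ^ 2 := by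
      have h2 : (2 / (|bb| * D)) ^ 2 = 4 / (bb ^ 2 * D ^ 2) := by
        rw [div_pow, mul_pow, sq_abs]; norm_num
      rw [h2, eq_div_iff (by positivity : bb ^ 2 * D ^ 2 ≠ 0)]
      linear_combination (-(bb ^ 2 * (1 + A - R) ^ 2)) * hk2 + bb ^ 2 * hDsq + 4 * hRbb
    rw [h1, Real.sqrt_sq (by positivity)]
  clear_value α
  have hxA : ∑ j : Fin d, x j ^ 2 = A := by rw [hAdef, esp_norm_sq]
  have hα0 : 0 < α := by rw [hαdef]; exact Real.arccos_pos.mpr hc2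
  have hαπ : α < Real.pi := by
    rw [hαdef]
    refine lt_of_le_of_ne (Real.arccos_le_pi _) ?_
    rw [Ne, Real.arccos_eq_pi]
    push_neg
    exact hc1
  refine ⟨p, α, ?_, hα0, hαπ, ?_, ?_⟩
  · -- ‖p‖ = 1
    refine esp_norm_eq_of_sq p zero_le_one ?_
    rw [esp_norm_sq, one_pow, Fin.sum_univ_succ, hp0]
    have hs : ∑ j : Fin d, p j.succ ^ 2 = 4 * k ^ 2 * A := by
      rw [← hxA, Finset.mul_sum]
      exact Finset.sum_congr rfl fun j _ => by rw [hps j]; ring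
    rw [hs]
    linear_combination hk2 - k ^ 2 * hDsq
  · -- image equality
    ext z
    simp only [Set.mem_image, Set.mem_setOf_eq, Metric.mem_sphere]
    constructor
    · rintro ⟨y, ⟨hy1, hy2⟩, rfl⟩
      have hsumy : y 0 ^ 2 + ∑ j : Fin d, y j.succ ^ 2 = 1 := by
        have h := esp_norm_sq y
        rw [hy1, one_pow, Fin.sum_univ_succ] at h
        linarith [h]
      have hS2 : (0:ℝ) ≤ ∑ j : Fin d, y j.succ ^ 2 :=
        Finset.sum_nonneg fun j _ => sq_nonneg _
      have hinner : k * (1 - A + R) * y 0 + 2 * k * ∑ j : Fin d, x j * y j.succ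
          = k * (1 + A - R) := by
        rw [← hcos, ← hy2, esp_inner, Fin.sum_univ_succ, hp0, Finset.mul_sum]
        congr 1
        exact Finset.sum_congr rfl fun j _ => by rw [hps j]; ring
      have hlin : (1 - A + R) * y 0 + 2 * ∑ j : Fin d, x j * y j.succ = 1 + A - R :=
        mul_left_cancel₀ hk0 (by linear_combination hinner)
      have ht : 0 < 1 + y 0 := by
        rcases eq_or_ne (y 0) (-1) with h0 | h0
        · exfalso
          have hz2 : ∑ j : Fin d, y j.succ ^ 2 = 0 := by rw [h0] at hsumy; linarith
          have hall : ∀ j ∈ Finset.univ, y (Fin.succ j) = 0 := by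
            intro j hj
            have := (Finset.sum_eq_zero_iff_of_nonneg
              (fun j _ => sq_nonneg (y j.succ))).mp hz2 j hj
            exact pow_eq_zero_iff two_ne_zero |>.mp this
          have hS1 : ∑ j : Fin d, x j * y j.succ = 0 :=
            Finset.sum_eq_zero fun j hj => by rw [hall j hj, mul_zero]
          rw [h0, hS1] at hlin
          linarith
        · have h1 : y 0 ^ 2 ≤ 1 := by linarith only [hsumy, hS2]
          have h2 : -1 ≤ y 0 := by nlinarith [h1, sq_nonneg (y 0 + 1)]
          rcases lt_or_eq_of_le h2 with h | h
          · linarith only [h]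
          · exact absurd h.symm h0
      have htne : (1 + y 0) ≠ 0 := ne_of_gt ht
      rw [dist_eq_norm]
      refine esp_norm_eq_of_sq _ (by positivity) ?_
      rw [hRval, norm_sub_sq_real, esp_norm_sq (stereoProj y), esp_inner, ← hAdef]
      have e1 : ∑ j : Fin d, stereoProj y j ^ 2
          = (∑ j : Fin d, y j.succ ^ 2) / (1 + y 0) ^ 2 := by
        rw [Finset.sum_div]
        refine Finset.sum_congr rfl fun j _ => ?_
        rw [show stereoProj y j = y j.succ / (1 + y 0) from rfl, div_pow]
      have e2 : ∑ j : Fin d, stereoProj y j * x j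
          = (∑ j : Fin d, x j * y j.succ) / (1 + y 0) := by
        rw [Finset.sum_div]
        refine Finset.sum_congr rfl fun j _ => ?_
        rw [show stereoProj y j = y j.succ / (1 + y 0) from rfl]
        ring
      rw [e1, e2]
      field_simp
      linear_combination hsumy - (1 + y 0) * hlin
    · intro hz
      rw [dist_eq_norm] at hz
      have hzx : ‖z - x‖ ^ 2 = R := by rw [hz, hRval]
      have hns := norm_sub_sq_real z x
      rw [hzx, esp_inner, ← hAdef] at hns
      set B : ℝ := ‖z‖ ^ 2 with hBdef
      have hB0 : (0:ℝ) ≤ B := hBdef ▸ sq_nonneg _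
      have hBne : (1:ℝ) + B ≠ 0 := by positivity
      have hBz : ∑ j : Fin d, z j ^ 2 = B := by rw [hBdef]; exact (esp_norm_sq z).symm
      set y : EuclideanSpace ℝ (Fin (d + 1)) :=
        WithLp.toLp 2 (fun i => Fin.cases ((1 - B) / (1 + B)) (fun j => 2 * z j / (1 + B)) i :
          ∀ _ : Fin (d + 1), ℝ) with hydef
      have hy0 : y 0 = (1 - B) / (1 + B) := rfl
      have hys : ∀ j : Fin d, y j.succ = 2 * z j / (1 + B) := fun j => rfl
      clear_value B y
      refine ⟨y, ⟨?_, ?_⟩, ?_⟩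
      · refine esp_norm_eq_of_sq y zero_le_one ?_
        rw [esp_norm_sq, one_pow, Fin.sum_univ_succ, hy0]
        have e3 : ∑ j : Fin d, y j.succ ^ 2 = 4 * B / (1 + B) ^ 2 := by
          have h5 : ∀ j ∈ Finset.univ, y j.succ ^ 2 = z j ^ 2 * (4 / (1 + B) ^ 2) :=
            fun j _ => by rw [hys j]; field_simp; ring
          rw [Finset.sum_congr rfl h5, ← Finset.sum_mul, hBz]
          field_simp
        rw [e3]
        field_simp
        ring
      · rw [esp_inner, Fin.sum_univ_succ, hp0, hy0, hcos]
        have e4 : ∑ j : Fin d, p j.succ * y j.succ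
            = 4 * k * (∑ j : Fin d, z j * x j) / (1 + B) := by
          have h6 : ∀ j ∈ Finset.univ, p j.succ * y j.succ
              = z j * x j * (4 * k / (1 + B)) := fun j _ => by rw [hps j, hys j]; field_simp; ring
          rw [Finset.sum_congr rfl h6, ← Finset.sum_mul]
          ring
        rw [e4]
        field_simp
        linear_combination 2 * hns
      · ext j
        show y j.succ / (1 + y 0) = z j
        rw [hys j, hy0]
        have h7 : 1 + (1 - B) / (1 + B) = 2 / (1 + B) := by field_simp; ring
        rw [h7]
        field_simp
  · -- cotangent
    rw [hcos, hsin, div_div_eq_mul_div]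
    field_simp
    linear_combination (bb * (1 + A - R)) * hkb - hRbb
end

section
/- Under the hypotheses of the previous statement, let z_j(θ) ∈ ℂ be the centers and b_j(θ) the curvatures of the images under a fixed Möbius transformation Ψ of the k circles of the rotated Steiner chain with concentric parents. Then for all integers 0 ≤ n ≤ m ≤ k-1, the sum ∑_{j=1}^k b_j(θ)^m z_j(θ)^n is independent of θ. -/
open OnePoint Real

/-- A similarity of the plane `ℂ`: `z ↦ a z + v` or `z ↦ a z̄ + v` with `a ≠ 0`. -/
def IsSimilarityC (f : ℂ → ℂ) : Prop :=
  ∃ a v : ℂ, a ≠ 0 ∧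
    ((∀ z, f z = a * z + v) ∨ (∀ z, f z = a * (starRingEnd ℂ) z + v))

/-- Inversion in the unit circle centered at `c`. -/
noncomputable def cInversion (c z : ℂ) : ℂ := c + (z - c) / ((Complex.normSq (z - c) : ℂ))

/-- Extension of a planar map to `ℂ ∪ {∞}`, fixing `∞`. -/
def extendC (f : ℂ → ℂ) : OnePoint ℂ → OnePoint ℂ := Option.map f

/-- Inversion in the unit circle centered at `c`, extended to `ℂ ∪ {∞}`. -/
noncomputable def extInversionC (c : ℂ) : OnePoint ℂ → OnePoint ℂ :=
  fun p => Option.elim p (OnePoint.some c)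
    (fun z => if z = c then (∞ : OnePoint ℂ) else OnePoint.some (cInversion c z))

/-- A Möbius (conformal) transformation of `ℂ ∪ {∞}`: an element of the group of
transformations generated by extended similarities and unit-circle inversions. -/
def IsMobiusC (g : OnePoint ℂ → OnePoint ℂ) : Prop :=
  g ∈ Submonoid.closure
    {f : Function.End (OnePoint ℂ) |
      (∃ s, IsSimilarityC s ∧ f = extendC s) ∨ ∃ c, f = extInversionC c}


namespace SteinerAux

abbrev Tri := ℝ × ℂ × ℝ

noncomputable def Efun (v : Tri) (z : ℂ) : ℝ :=
  v.1 * Complex.normSq z - 2 * (((starRingEnd ℂ) v.2.1) * z).re + v.2.2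

noncomputable def circSet (v : Tri) : Set (OnePoint ℂ) :=
  (OnePoint.some '' {z | Efun v z = 0}) ∪ (if v.1 = 0 then {∞} else ∅)

noncomputable def regSet (v : Tri) : Set (OnePoint ℂ) :=
  (OnePoint.some '' {z | Efun v z < 0}) ∪ (if v.1 < 0 then {∞} else ∅)

noncomputable def Qf (v : Tri) : ℝ := Complex.normSq v.2.1 - v.1 * v.2.2

def Good (g : OnePoint ℂ → OnePoint ℂ) : Prop :=
  ∃ (L : Tri →ₗ[ℝ] Tri) (μ : ℝ), 0 < μ ∧ (∀ v, Qf (L v) = μ * Qf v) ∧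
    (∀ v, g '' circSet v = circSet (L v)) ∧ (∀ v, g '' regSet v = regSet (L v))

lemma some_ne_infty (z : ℂ) : (OnePoint.some z : OnePoint ℂ) ≠ ∞ :=
  Option.some_ne_none z

lemma some_inj : Function.Injective (OnePoint.some : ℂ → OnePoint ℂ) :=
  Option.some_injective ℂ

lemma mem_circSet_some {v : Tri} {z : ℂ} :
    (OnePoint.some z : OnePoint ℂ) ∈ circSet v ↔ Efun v z = 0 := by
  simp only [circSet, Set.mem_union, Set.mem_image, Set.mem_setOf_eq]
  constructor
  · rintro (⟨x, hx, hxz⟩ | h)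
    · rwa [some_inj hxz] at hx
    · split_ifs at h with h1
      · exact absurd h (some_ne_infty z)
      · exact absurd h (Set.notMem_empty _)
  · intro h; exact Or.inl ⟨z, h, rfl⟩

lemma mem_circSet_infty {v : Tri} :
    (∞ : OnePoint ℂ) ∈ circSet v ↔ v.1 = 0 := by
  simp only [circSet, Set.mem_union, Set.mem_image, Set.mem_setOf_eq]
  constructor
  · rintro (⟨x, _, hxz⟩ | h)
    · exact absurd hxz (some_ne_infty x)
    · split_ifs at h with h1
      · exact h1
      · exact absurd h (Set.notMem_empty _)
  · intro h; right; rw [if_pos h]; rfl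

lemma mem_regSet_some {v : Tri} {z : ℂ} :
    (OnePoint.some z : OnePoint ℂ) ∈ regSet v ↔ Efun v z < 0 := by
  simp only [regSet, Set.mem_union, Set.mem_image, Set.mem_setOf_eq]
  constructor
  · rintro (⟨x, hx, hxz⟩ | h)
    · rwa [some_inj hxz] at hx
    · split_ifs at h with h1
      · exact absurd h (some_ne_infty z)
      · exact absurd h (Set.notMem_empty _)
  · intro h; exact Or.inl ⟨z, h, rfl⟩

lemma mem_regSet_infty {v : Tri} :
    (∞ : OnePoint ℂ) ∈ regSet v ↔ v.1 < 0 := by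
  simp only [regSet, Set.mem_union, Set.mem_image, Set.mem_setOf_eq]
  constructor
  · rintro (⟨x, _, hxz⟩ | h)
    · exact absurd hxz (some_ne_infty x)
    · split_ifs at h with h1
      · exact h1
      · exact absurd h (Set.notMem_empty _)
  · intro h; right; rw [if_pos h]; rfl

noncomputable def LaffD (a v₀ : ℂ) : Tri →ₗ[ℝ] Tri where
  toFun v := (v.1, a * v.2.1 + v.1 • v₀,
    Complex.normSq a * v.2.2 + Complex.normSq v₀ * v.1
      + 2 * (a * (starRingEnd ℂ) v₀ * v.2.1).re)
  map_add' x y := by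
    ext <;> simp [mul_add, add_smul, Complex.add_re] <;> ring
  map_smul' c x := by
    ext <;> simp [Complex.real_smul, smul_eq_mul, mul_add, Complex.ofReal_mul,
      Complex.mul_re, Complex.ofReal_re, Complex.ofReal_im] <;> ring

noncomputable def Lconj : Tri →ₗ[ℝ] Tri where
  toFun v := (v.1, (starRingEnd ℂ) v.2.1, v.2.2)
  map_add' x y := by ext <;> simp
  map_smul' c x := by ext <;> simp [Complex.real_smul, Complex.ofReal_mul]

noncomputable def Linv : Tri →ₗ[ℝ] Tri where
  toFun v := (v.2.2, v.2.1, v.1)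
  map_add' x y := by ext <;> simp
  map_smul' c x := by ext <;> simp

lemma Qf_affD (a v₀ : ℂ) (v : Tri) : Qf (LaffD a v₀ v) = Complex.normSq a * Qf v := by
  obtain ⟨β, w, δ⟩ := v
  simp only [Qf, LaffD, LinearMap.coe_mk, AddHom.coe_mk, Complex.real_smul]
  simp only [Complex.normSq_apply, Complex.add_re, Complex.add_im, Complex.mul_re,
    Complex.mul_im, map_add, map_mul, Complex.conj_re, Complex.conj_im,
    Complex.ofReal_re, Complex.ofReal_im]
  ring

lemma Qf_conj (v : Tri) : Qf (Lconj v) = Qf v := by simp [Qf, Lconj]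

lemma Qf_inv (v : Tri) : Qf (Linv v) = Qf v := by simp [Qf, Linv]; ring

lemma Efun_affD (a v₀ : ℂ) (v : Tri) (z : ℂ) :
    Efun (LaffD a v₀ v) (a * z + v₀) = Complex.normSq a * Efun v z := by
  obtain ⟨β, w, δ⟩ := v
  simp only [Efun, LaffD, LinearMap.coe_mk, AddHom.coe_mk, Complex.real_smul]
  simp only [Complex.normSq_apply, Complex.add_re, Complex.add_im, Complex.mul_re,
    Complex.mul_im, map_add, map_mul, Complex.conj_re, Complex.conj_im,
    Complex.ofReal_re, Complex.ofReal_im]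
  ring

lemma Efun_conj (v : Tri) (z : ℂ) :
    Efun (Lconj v) ((starRingEnd ℂ) z) = Efun v z := by
  obtain ⟨β, w, δ⟩ := v
  simp only [Efun, Lconj, LinearMap.coe_mk, AddHom.coe_mk]
  simp only [Complex.normSq_apply, Complex.mul_re, map_mul, Complex.conj_re,
    Complex.conj_im, RingHomCompTriple.comp_apply, RingHom.id_apply]
  ring

lemma Efun_zero (v : Tri) : Efun v 0 = v.2.2 := by simp [Efun]

lemma Efun_inv0 (v : Tri) (z : ℂ) (hz : z ≠ 0) :
    Efun v (z / (Complex.normSq z : ℂ)) = (Complex.normSq z)⁻¹ * Efun (Linv v) z := by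
  obtain ⟨β, w, δ⟩ := v
  have hn : Complex.normSq z ≠ 0 := by simpa using hz
  simp only [Efun, Linv, LinearMap.coe_mk, AddHom.coe_mk]
  rw [Complex.normSq_div, Complex.normSq_ofReal]
  have h1 : ((starRingEnd ℂ) w * (z / (Complex.normSq z : ℂ))).re
      = ((starRingEnd ℂ) w * z).re / Complex.normSq z := by
    simp [Complex.mul_re, Complex.div_re, Complex.normSq_ofReal, Complex.div_im,
      Complex.ofReal_re, Complex.ofReal_im]
    field_simp
  rw [h1]
  field_simp
  ring

/-- image of a set of the form `{z | p z}` under a bijection -/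
lemma image_setOf {f finv : ℂ → ℂ} (h2 : ∀ z, f (finv z) = z)
    {p q : ℂ → Prop} (h : ∀ z, q (f z) ↔ p z) : f '' {z | p z} = {z | q z} := by
  ext y
  constructor
  · rintro ⟨x, hx, rfl⟩; exact (h x).2 hx
  · intro hy
    exact ⟨finv y, (h (finv y)).1 (by rwa [h2 y]), h2 y⟩

lemma extendC_image_some (f : ℂ → ℂ) (S : Set ℂ) :
    extendC f '' (OnePoint.some '' S) = OnePoint.some '' (f '' S) := by
  rw [← Set.image_comp, ← Set.image_comp]; rfl

lemma extendC_image_ite (f : ℂ → ℂ) (c : Prop) [Decidable c] :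
    extendC f '' (if c then {(∞ : OnePoint ℂ)} else ∅)
      = (if c then {(∞ : OnePoint ℂ)} else ∅) := by
  split_ifs <;> simp [extendC]
  · exact Set.image_singleton
  · exact Set.image_empty _

/-- Good for maps of the form extendC of a plane bijection compatible with E -/
lemma good_extend {f finv : ℂ → ℂ} (h2 : ∀ z, f (finv z) = z)
    (L : Tri →ₗ[ℝ] Tri) (μ : ℝ) (hμ : 0 < μ) (hQ : ∀ v, Qf (L v) = μ * Qf v)
    (hfst : ∀ v, (L v).1 = v.1)
    (hE : ∀ v z, Efun (L v) (f z) = μ * Efun v z) :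
    Good (extendC f) := by
  refine ⟨L, μ, hμ, hQ, fun v => ?_, fun v => ?_⟩
  · rw [circSet, Set.image_union, extendC_image_some, extendC_image_ite,
      image_setOf h2 (p := fun z => Efun v z = 0) (q := fun z => Efun (L v) z = 0)
        (fun z => by
          show Efun (L v) (f z) = 0 ↔ Efun v z = 0
          rw [hE v z]
          exact ⟨fun h => (mul_eq_zero.1 h).resolve_left (ne_of_gt hμ),
            fun h => by rw [h, mul_zero]⟩),
      circSet, hfst]
  · rw [regSet, Set.image_union, extendC_image_some, extendC_image_ite,
      image_setOf h2 (p := fun z => Efun v z < 0) (q := fun z => Efun (L v) z < 0)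
        (fun z => by
          show Efun (L v) (f z) < 0 ↔ Efun v z < 0
          rw [hE v z]
          exact ⟨fun h => by nlinarith, fun h => mul_neg_of_pos_of_neg hμ h⟩),
      regSet, hfst]


lemma good_affD (a v₀ : ℂ) (ha : a ≠ 0) : Good (extendC fun z => a * z + v₀) := by
  refine good_extend (finv := fun y => (y - v₀) / a) (fun z => by field_simp; ring)
    (LaffD a v₀) (Complex.normSq a) (by simpa using Complex.normSq_pos.2 ha)
    (Qf_affD a v₀) (fun v => rfl) (fun v z => Efun_affD a v₀ v z)

lemma good_conjmap : Good (extendC (starRingEnd ℂ)) := by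
  refine good_extend (finv := (starRingEnd ℂ)) (fun z => by simp)
    Lconj 1 one_pos (fun v => by rw [Qf_conj, one_mul]) (fun v => rfl)
    (fun v z => by rw [Efun_conj, one_mul])

lemma cInversion_zero (z : ℂ) : cInversion 0 z = z / (Complex.normSq z : ℂ) := by
  simp [cInversion]

lemma extendC_some (f : ℂ → ℂ) (z : ℂ) :
    extendC f (OnePoint.some z) = OnePoint.some (f z) := rfl

lemma extendC_infty (f : ℂ → ℂ) : extendC f (∞ : OnePoint ℂ) = (∞ : OnePoint ℂ) := rfl

lemma extInversionC_some (c z : ℂ) :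
    extInversionC c (OnePoint.some z)
      = if z = c then (∞ : OnePoint ℂ) else OnePoint.some (cInversion c z) := rfl

lemma extInversionC_infty (c : ℂ) :
    extInversionC c (∞ : OnePoint ℂ) = OnePoint.some c := rfl

lemma extInv0_infty : extInversionC 0 (∞ : OnePoint ℂ) = OnePoint.some 0 := rfl

lemma extInv0_some_zero : extInversionC 0 (OnePoint.some (0 : ℂ)) = (∞ : OnePoint ℂ) := by
  rw [extInversionC_some, if_pos rfl]

lemma extInv0_some {z : ℂ} (hz : z ≠ 0) :
    extInversionC 0 (OnePoint.some z) = OnePoint.some (z / (Complex.normSq z : ℂ)) := by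
  rw [extInversionC_some, if_neg hz, cInversion_zero]

lemma extInv0_invol (p : OnePoint ℂ) : extInversionC 0 (extInversionC 0 p) = p := by
  match p with
  | none =>
    show extInversionC 0 (extInversionC 0 (∞ : OnePoint ℂ)) = (∞ : OnePoint ℂ)
    rw [extInv0_infty, extInv0_some_zero]
  | Option.some z =>
    show extInversionC 0 (extInversionC 0 (OnePoint.some z)) = OnePoint.some z
    by_cases hz : z = 0
    · subst hz
      rw [extInv0_some_zero, extInv0_infty]
    · have hn : Complex.normSq z ≠ 0 := by simpa using hz
      have hz2 : z / (Complex.normSq z : ℂ) ≠ 0 := by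
        simp [div_eq_zero_iff, hz, hn]
      rw [extInv0_some hz, extInv0_some hz2]
      congr 1
      rw [Complex.normSq_div, Complex.normSq_ofReal]
      have hnc : ((Complex.normSq z : ℝ) : ℂ) ≠ 0 := Complex.ofReal_ne_zero.2 hn
      field_simp
      simp

lemma good_inv0 : Good (extInversionC 0) := by
  refine ⟨Linv, 1, one_pos, fun v => by rw [Qf_inv, one_mul], fun v => ?_, fun v => ?_⟩
  · rw [Set.image_eq_preimage_of_inverse extInv0_invol extInv0_invol]
    ext p
    match p with
    | none =>
      show extInversionC 0 (∞ : OnePoint ℂ) ∈ circSet v ↔ (∞ : OnePoint ℂ) ∈ circSet (Linv v)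
      rw [extInv0_infty, mem_circSet_some, mem_circSet_infty, Efun_zero]
      exact Iff.rfl
    | Option.some z =>
      show extInversionC 0 (OnePoint.some z) ∈ circSet v ↔ OnePoint.some z ∈ circSet (Linv v)
      by_cases hz : z = 0
      · subst hz
        rw [extInv0_some_zero, mem_circSet_infty, mem_circSet_some, Efun_zero]
        exact Iff.rfl
      · have hn : Complex.normSq z ≠ 0 := by simpa using hz
        rw [extInv0_some hz, mem_circSet_some, mem_circSet_some, Efun_inv0 v z hz]
        constructor
        · intro h
          exact (mul_eq_zero.1 h).resolve_left (inv_ne_zero hn)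
        · intro h; rw [h, mul_zero]
  · rw [Set.image_eq_preimage_of_inverse extInv0_invol extInv0_invol]
    ext p
    match p with
    | none =>
      show extInversionC 0 (∞ : OnePoint ℂ) ∈ regSet v ↔ (∞ : OnePoint ℂ) ∈ regSet (Linv v)
      rw [extInv0_infty, mem_regSet_some, mem_regSet_infty, Efun_zero]
      exact Iff.rfl
    | Option.some z =>
      show extInversionC 0 (OnePoint.some z) ∈ regSet v ↔ OnePoint.some z ∈ regSet (Linv v)
      by_cases hz : z = 0
      · subst hz
        rw [extInv0_some_zero, mem_regSet_infty, mem_regSet_some, Efun_zero]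
        exact Iff.rfl
      · have hn : Complex.normSq z ≠ 0 := by simpa using hz
        have hn' : 0 < (Complex.normSq z)⁻¹ :=
          inv_pos.2 (Complex.normSq_pos.2 hz)
        rw [extInv0_some hz, mem_regSet_some, mem_regSet_some, Efun_inv0 v z hz]
        exact ⟨fun h => by nlinarith, fun h => mul_neg_of_pos_of_neg hn' h⟩

lemma good_comp {g₁ g₂ : OnePoint ℂ → OnePoint ℂ} (h₁ : Good g₁) (h₂ : Good g₂) :
    Good (g₁ ∘ g₂) := by
  obtain ⟨L₁, μ₁, hμ₁, hQ₁, hc₁, hr₁⟩ := h₁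
  obtain ⟨L₂, μ₂, hμ₂, hQ₂, hc₂, hr₂⟩ := h₂
  refine ⟨L₁ ∘ₗ L₂, μ₁ * μ₂, mul_pos hμ₁ hμ₂, fun v => ?_, fun v => ?_, fun v => ?_⟩
  · simp only [LinearMap.comp_apply, hQ₁, hQ₂]; ring
  · rw [Set.image_comp, hc₂, hc₁]; rfl
  · rw [Set.image_comp, hr₂, hr₁]; rfl

lemma good_id : Good id := by
  refine ⟨LinearMap.id, 1, one_pos, fun v => by rw [one_mul]; rfl,
    fun v => by simp, fun v => by simp⟩

lemma extInversionC_decomp (c : ℂ) :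
    extInversionC c
      = (extendC fun z => (1:ℂ) * z + c) ∘ extInversionC 0 ∘ (extendC fun z => (1:ℂ) * z + (-c)) := by
  funext p
  match p with
  | none =>
    show extInversionC c (∞ : OnePoint ℂ)
      = extendC _ (extInversionC 0 (extendC (fun z => (1:ℂ) * z + (-c)) (∞ : OnePoint ℂ)))
    rw [extInversionC_infty, extendC_infty, extInv0_infty, extendC_some]
    norm_num
  | Option.some z =>
    show extInversionC c (OnePoint.some z)
      = extendC _ (extInversionC 0 (extendC (fun w => (1:ℂ) * w + (-c)) (OnePoint.some z)))
    rw [extendC_some]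
    by_cases hz : z = c
    · rw [extInversionC_some, if_pos hz]
      have h0 : (1:ℂ) * z + (-c) = 0 := by rw [hz]; ring
      rw [h0, extInv0_some_zero, extendC_infty]
    · have h0 : (1:ℂ) * z + (-c) ≠ 0 := by
        intro h; apply hz; linear_combination h
      rw [extInversionC_some, if_neg hz, extInv0_some h0, extendC_some]
      congr 1
      have h1 : (1:ℂ) * z + (-c) = z - c := by ring
      rw [h1, cInversion]
      ring

lemma good_inversion (c : ℂ) : Good (extInversionC c) := by
  rw [extInversionC_decomp c]
  exact good_comp (good_affD 1 c one_ne_zero)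
    (good_comp good_inv0 (good_affD 1 (-c) one_ne_zero))

lemma good_conj_sim (a v₀ : ℂ) (ha : a ≠ 0) :
    Good (extendC fun z => a * (starRingEnd ℂ) z + v₀) := by
  have hdec : (extendC fun z => a * (starRingEnd ℂ) z + v₀)
      = (extendC fun z => a * z + v₀) ∘ extendC (starRingEnd ℂ) := by
    funext p
    match p with
    | none => rfl
    | Option.some z => rfl
  rw [hdec]
  exact good_comp (good_affD a v₀ ha) good_conjmap

lemma good_mobius {g : OnePoint ℂ → OnePoint ℂ} (hg : IsMobiusC g) : Good g := by
  have hg' : (g : Function.End (OnePoint ℂ)) ∈ Submonoid.closure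
      {f : Function.End (OnePoint ℂ) |
        (∃ s, IsSimilarityC s ∧ f = extendC s) ∨ ∃ c, f = extInversionC c} := hg
  refine Submonoid.closure_induction
    (motive := fun (x : Function.End (OnePoint ℂ)) _ => Good x) ?_ ?_ ?_ hg'
  · rintro f (⟨s, ⟨a, v₀, ha, hs | hs⟩, rfl⟩ | ⟨c, rfl⟩)
    · have : s = fun z => a * z + v₀ := funext hs
      rw [this]
      exact good_affD a v₀ ha
    · have : s = fun z => a * (starRingEnd ℂ) z + v₀ := funext hs
      rw [this]
      exact good_conj_sim a v₀ ha
    · exact good_inversion c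
  · exact good_id
  · intro f g _ _ hf hg
    exact good_comp hf hg

noncomputable def Vc (β : ℝ) (w : ℂ) : Tri :=
  (β, (β:ℂ) * w, β * Complex.normSq w - 1/β)

lemma Efun_Vc (β : ℝ) (w z : ℂ) :
    Efun (Vc β w) z = β * Complex.normSq (z - w) - 1/β := by
  simp only [Efun, Vc, Complex.normSq_apply, Complex.mul_re, Complex.mul_im,
    Complex.sub_re, Complex.sub_im, map_mul, Complex.conj_re, Complex.conj_im,
    Complex.conj_ofReal, Complex.ofReal_re, Complex.ofReal_im]
  ring

lemma Qf_Vc {β : ℝ} (hβ : β ≠ 0) (w : ℂ) : Qf (Vc β w) = 1 := by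
  simp only [Qf, Vc, Complex.normSq_mul, Complex.normSq_ofReal, Complex.normSq_apply]
  field_simp
  simp only [Complex.mul_re, Complex.mul_im, Complex.ofReal_re, Complex.ofReal_im]
  ring

lemma sq_eq_sq_nonneg {a b : ℝ} (ha : 0 ≤ a) (hb : 0 ≤ b) (h : a^2 = b^2) : a = b := by
  nlinarith

lemma dist_eq_iff_normSq {z w : ℂ} {ρ : ℝ} (hρ : 0 ≤ ρ) :
    Complex.normSq (z - w) = ρ^2 ↔ dist z w = ρ := by
  rw [Complex.dist_eq, ← Complex.sq_norm]
  constructor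
  · intro h; exact sq_eq_sq_nonneg (norm_nonneg _) hρ h
  · intro h; rw [h]

lemma dist_lt_iff_normSq {z w : ℂ} {ρ : ℝ} (hρ : 0 < ρ) :
    Complex.normSq (z - w) < ρ^2 ↔ dist z w < ρ := by
  rw [Complex.dist_eq, ← Complex.sq_norm]
  constructor <;> intro h <;> nlinarith [norm_nonneg (z - w)]

lemma gt_dist_iff_normSq {z w : ℂ} {ρ : ℝ} (hρ : 0 ≤ ρ) :
    ρ^2 < Complex.normSq (z - w) ↔ ρ < dist z w := by
  rw [Complex.dist_eq, ← Complex.sq_norm]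
  constructor <;> intro h <;> nlinarith [norm_nonneg (z - w)]

lemma sphere_eq_sphere {c z₀ : ℂ} {r ρ : ℝ} (hr : 0 < r) (hρ : 0 < ρ)
    (h : Metric.sphere c r = Metric.sphere z₀ ρ) : c = z₀ ∧ r = ρ := by
  have key : ∀ u : ℂ, dist u z₀ = ρ → Complex.normSq (u - c) = r^2 := by
    intro u hu
    have : u ∈ Metric.sphere c r := by rw [h]; exact hu
    rw [Metric.mem_sphere] at this
    exact (dist_eq_iff_normSq hr.le).2 this
  have h1 := key (z₀ + ρ) (by
    have : (z₀ + ρ) - z₀ = (ρ:ℂ) := by ring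
    simp [Complex.dist_eq, this, abs_of_nonneg hρ.le])
  have h2 := key (z₀ - ρ) (by
    have : (z₀ - ρ) - z₀ = -(ρ:ℂ) := by ring
    simp [Complex.dist_eq, this, abs_of_nonneg hρ.le])
  have h3 := key (z₀ + ρ * Complex.I) (by
    have : (z₀ + ρ * Complex.I) - z₀ = (ρ:ℂ) * Complex.I := by ring
    simp [Complex.dist_eq, this, map_mul, Complex.norm_real, Complex.norm_I,
      abs_of_nonneg hρ.le])
  have h4 := key (z₀ - ρ * Complex.I) (by
    have : (z₀ - ρ * Complex.I) - z₀ = -((ρ:ℂ) * Complex.I) := by ring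
    simp [Complex.dist_eq, this, map_mul, Complex.norm_real, Complex.norm_I,
      abs_of_nonneg hρ.le])
  simp only [Complex.normSq_apply, Complex.add_re, Complex.add_im, Complex.sub_re,
    Complex.sub_im, Complex.mul_re, Complex.mul_im, Complex.I_re, Complex.I_im,
    Complex.ofReal_re, Complex.ofReal_im] at h1 h2 h3 h4
  have hre : z₀.re - c.re = 0 := by nlinarith
  have him : z₀.im - c.im = 0 := by nlinarith
  constructor
  · apply Complex.ext <;> [skip; skip] <;> linarith
  · have : ρ^2 = r^2 := by nlinarith
    exact (sq_eq_sq_nonneg hr.le hρ.le this.symm)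


lemma Efun_recenter (v : Tri) (hv : v.1 ≠ 0) (z : ℂ) :
    Efun v z = v.1 * Complex.normSq (z - v.2.1 / (v.1:ℂ)) - Qf v / v.1 := by
  obtain ⟨β, w, δ⟩ := v
  simp only at hv
  simp only [Efun, Qf, Complex.normSq_apply, Complex.mul_re, Complex.mul_im,
    Complex.sub_re, Complex.sub_im, Complex.div_re, Complex.div_im, map_mul,
    Complex.conj_re, Complex.conj_im, Complex.normSq_ofReal,
    Complex.ofReal_re, Complex.ofReal_im]
  field_simp
  ring


lemma root_pow_ne_one {k : ℕ} (hk : 0 < k) {s : ℤ} (hs : s ≠ 0) (habs : s.natAbs < k) :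
    Complex.exp (Complex.I * (2 * Real.pi / k)) ^ s ≠ 1 := by
  intro h
  rw [← Complex.exp_int_mul] at h
  rw [Complex.exp_eq_one_iff] at h
  obtain ⟨n, hn⟩ := h
  have hk0 : (k : ℂ) ≠ 0 := Nat.cast_ne_zero.2 hk.ne'
  have hpi : (Real.pi : ℂ) ≠ 0 := by
    exact_mod_cast Complex.ofReal_ne_zero.2 Real.pi_ne_zero
  have hI : Complex.I ≠ 0 := Complex.I_ne_zero
  have hsn : (s : ℂ) = n * k := by
    field_simp at hn
    have h0 : ((s:ℂ) - n * k) * (2 * Real.pi * Complex.I) = 0 := by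
      linear_combination (2 * Real.pi * Complex.I) * hn
    have h2 : ((2:ℂ) * Real.pi * Complex.I) ≠ 0 := by
      simp [hpi, hI]
    have := (mul_eq_zero.1 h0).resolve_right h2
    exact sub_eq_zero.1 this
  have hsz : s = n * k := by exact_mod_cast hsn
  have hnat : s.natAbs = n.natAbs * k := by
    rw [hsz, Int.natAbs_mul, Int.natAbs_natCast]
  have hn0 : n.natAbs ≠ 0 := by
    intro h0
    apply hs
    rw [hsz]
    have : n = 0 := Int.natAbs_eq_zero.1 h0
    rw [this, zero_mul]
  have : k ≤ s.natAbs := by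
    rw [hnat]
    calc k = 1 * k := (one_mul k).symm
    _ ≤ n.natAbs * k := Nat.mul_le_mul_right k (Nat.one_le_iff_ne_zero.2 hn0)
  omega


lemma exp_fact (k : ℕ) (hk : 0 < k) (θ : ℝ) (j : ℕ) :
    Complex.exp (Complex.I * (2 * Real.pi * j / k + θ))
      = Complex.exp (Complex.I * θ) * Complex.exp (Complex.I * (2 * Real.pi / k)) ^ j := by
  rw [← Complex.exp_nat_mul, ← Complex.exp_add]
  congr 1
  have hk0 : (k : ℂ) ≠ 0 := Nat.cast_ne_zero.2 hk.ne'
  field_simp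
  ring

lemma W_pow_k (k : ℕ) (hk : 0 < k) :
    Complex.exp (Complex.I * (2 * Real.pi / k)) ^ (k:ℤ) = 1 := by
  rw [← Complex.exp_int_mul]
  have hk0 : (k : ℂ) ≠ 0 := Nat.cast_ne_zero.2 hk.ne'
  have : ((k:ℤ) : ℂ) * (Complex.I * (2 * Real.pi / k)) = 2 * Real.pi * Complex.I := by
    push_cast
    field_simp
  rw [this, Complex.exp_two_pi_mul_I]

lemma geom_root_sum {k : ℕ} (hk : 0 < k) {s : ℤ} (hs : s.natAbs < k) :
    ∑ j ∈ Finset.range k, (Complex.exp (Complex.I * (2 * Real.pi / k)) ^ s) ^ j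
      = if s = 0 then (k:ℂ) else 0 := by
  set W := Complex.exp (Complex.I * (2 * Real.pi / k)) with hW
  by_cases h0 : s = 0
  · subst h0
    simp
  · rw [if_neg h0]
    have hne : W ^ s ≠ 1 := root_pow_ne_one hk h0 hs
    rw [geom_sum_eq hne]
    have : (W ^ s) ^ k = 1 := by
      rw [← zpow_natCast (W^s) k, ← zpow_mul, mul_comm, zpow_mul, W_pow_k k hk, one_zpow]
    rw [this, sub_self, zero_div]

lemma key_sum {k : ℕ} (hk : 0 < k) {m : ℕ} (hm : m < k) (Pol : Polynomial ℂ)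
    (hdeg : Pol.natDegree < 2*m + 1) (θ : ℝ) :
    ∑ j ∈ Finset.range k,
        Polynomial.eval (Complex.exp (Complex.I * (2 * Real.pi * j / k + θ))) Pol
          * ((Complex.exp (Complex.I * (2 * Real.pi * j / k + θ)))⁻¹) ^ m
      = k * Pol.coeff m := by
  set E := Complex.exp (Complex.I * θ) with hE
  set W := Complex.exp (Complex.I * (2 * Real.pi / k)) with hW
  have hE0 : E ≠ 0 := Complex.exp_ne_zero _
  have hW0 : W ≠ 0 := Complex.exp_ne_zero _
  have hstep : ∀ j ∈ Finset.range k,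
      Polynomial.eval (Complex.exp (Complex.I * (2 * Real.pi * j / k + θ))) Pol
          * ((Complex.exp (Complex.I * (2 * Real.pi * j / k + θ)))⁻¹) ^ m
        = ∑ t ∈ Finset.range (2*m+1),
            Pol.coeff t * (E^((t:ℤ) - m) * (W ^ ((t:ℤ) - m)) ^ j) := by
    intro j _
    rw [exp_fact k hk θ j, Polynomial.eval_eq_sum_range' hdeg, Finset.sum_mul]
    refine Finset.sum_congr rfl (fun t _ => ?_)
    have hu0 : E * W ^ j ≠ 0 := mul_ne_zero hE0 (pow_ne_zero j hW0)
    rw [mul_assoc]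
    congr 1
    have h1 : (E * W ^ j) ^ t * ((E * W ^ j)⁻¹) ^ m = (E * W ^ j) ^ ((t:ℤ) - m) := by
      rw [← zpow_natCast (E * W^j) t, ← zpow_natCast ((E * W^j)⁻¹) m, inv_zpow,
        ← zpow_neg, ← zpow_add₀ hu0, Int.sub_eq_add_neg]
    rw [h1, mul_zpow, ← zpow_natCast W j, ← zpow_mul, mul_comm (j:ℤ), zpow_mul,
      zpow_natCast (W ^ ((t:ℤ) - m)) j]
  rw [Finset.sum_congr rfl hstep, Finset.sum_comm]
  have hinner : ∀ t ∈ Finset.range (2*m+1),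
      ∑ j ∈ Finset.range k, Pol.coeff t * (E^((t:ℤ) - m) * (W ^ ((t:ℤ) - m)) ^ j)
        = if t = m then (k:ℂ) * Pol.coeff m else 0 := by
    intro t ht
    rw [Finset.mem_range] at ht
    have habs : ((t:ℤ) - m).natAbs < k := by omega
    rw [← Finset.mul_sum, ← Finset.mul_sum, geom_root_sum hk habs]
    by_cases hts : t = m
    · subst hts
      rw [if_pos (by omega : (t:ℤ) - t = 0), if_pos rfl]
      simp [zpow_zero]
      ring
    · rw [if_neg (by omega : ¬((t:ℤ) - m = 0)), if_neg hts]
      simp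
  rw [Finset.sum_congr rfl hinner, Finset.sum_ite_eq' (Finset.range (2*m+1)) m
    (fun _ => (k:ℂ) * Pol.coeff m)]
  rw [if_pos (Finset.mem_range.2 (by omega))]


lemma Efun_Vc_zero_iff {β : ℝ} (hβ : β ≠ 0) (c : ℝ) :
    β * c - 1/β = 0 ↔ c = 1/β^2 := by
  have h : β * c - 1/β = β * (c - 1/β^2) := by field_simp
  rw [h, mul_eq_zero, or_iff_right hβ, sub_eq_zero]

lemma circSet_Vc {β : ℝ} (hβ : β ≠ 0) (w : ℂ) :
    circSet (Vc β w) = OnePoint.some '' Metric.sphere w (1/|β|) := by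
  have hb2 : (1/|β|)^2 = 1/β^2 := by rw [div_pow, one_pow, sq_abs]
  rw [circSet, show (Vc β w).1 = β from rfl, if_neg hβ, Set.union_empty]
  have hAB : {z : ℂ | Efun (Vc β w) z = 0} = Metric.sphere w (1/|β|) := by
    ext x
    show Efun (Vc β w) x = 0 ↔ dist x w = 1/|β|
    rw [Efun_Vc, Efun_Vc_zero_iff hβ, ← hb2,
      dist_eq_iff_normSq (by positivity : (0:ℝ) ≤ 1/|β|)]
  rw [hAB]

lemma regSet_Vc_pos {β : ℝ} (hβ : 0 < β) (w : ℂ) :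
    regSet (Vc β w) = OnePoint.some '' Metric.ball w (1/β) := by
  rw [regSet, show (Vc β w).1 = β from rfl, if_neg (not_lt.2 hβ.le), Set.union_empty]
  have hAB : {z : ℂ | Efun (Vc β w) z < 0} = Metric.ball w (1/β) := by
    ext x
    show Efun (Vc β w) x < 0 ↔ dist x w < 1/β
    rw [Efun_Vc]
    have hb2 : (1/β)^2 = 1/β^2 := by rw [div_pow, one_pow]
    rw [← dist_lt_iff_normSq (by positivity : (0:ℝ) < 1/β), hb2]
    have hfact : β * Complex.normSq (x-w) - 1/β
        = β * (Complex.normSq (x-w) - 1/β^2) := by field_simp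
    rw [hfact, mul_neg_iff]
    constructor
    · rintro (⟨_, h2⟩ | ⟨h1, _⟩)
      · linarith
      · linarith
    · intro h2
      exact Or.inl ⟨hβ, by linarith⟩
  rw [hAB]

lemma regSet_Vc_neg {β : ℝ} (hβ : β < 0) (w : ℂ) :
    regSet (Vc β w)
      = OnePoint.some '' (Metric.closedBall w (1/|β|))ᶜ ∪ {∞} := by
  rw [regSet, show (Vc β w).1 = β from rfl, if_pos hβ]
  have hAB : {z : ℂ | Efun (Vc β w) z < 0} = (Metric.closedBall w (1/|β|))ᶜ := by
    ext x
    show Efun (Vc β w) x < 0 ↔ ¬ dist x w ≤ 1/|β|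
    rw [Efun_Vc, not_le]
    have hb2 : (1/|β|)^2 = 1/β^2 := by rw [div_pow, one_pow, sq_abs]
    rw [← gt_dist_iff_normSq (one_div_nonneg.2 (abs_nonneg β)), hb2]
    have hfact : β * Complex.normSq (x-w) - 1/β
        = β * (Complex.normSq (x-w) - 1/β^2) := by
      have : β ≠ 0 := hβ.ne
      field_simp
    rw [hfact, mul_neg_iff]
    constructor
    · rintro (⟨h1, _⟩ | ⟨_, h2⟩)
      · linarith
      · linarith
    · intro h2
      exact Or.inr ⟨hβ, by linarith⟩
  rw [hAB]

lemma identify {v : Tri} {z₀ : ℂ} {bv : ℝ} (hbv : bv ≠ 0) (hQ : 0 < Qf v)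
    (hc : circSet v = OnePoint.some '' Metric.sphere z₀ (1/|bv|))
    (hsign : (0 < bv → ¬ (∞ : OnePoint ℂ) ∈ regSet v) ∧
      (bv < 0 → (∞ : OnePoint ℂ) ∈ regSet v)) :
    v.1 = Real.sqrt (Qf v) * bv ∧
      v.2.1 = ((Real.sqrt (Qf v) * bv : ℝ) : ℂ) * z₀ := by
  have hρ : (0:ℝ) < 1/|bv| := by positivity
  have hQs : 0 < Real.sqrt (Qf v) := Real.sqrt_pos.2 hQ
  have hv1 : v.1 ≠ 0 := by
    intro h
    have hinf : (∞:OnePoint ℂ) ∈ circSet v := mem_circSet_infty.2 h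
    rw [hc] at hinf
    obtain ⟨x, _, hx⟩ := hinf
    exact some_ne_infty x hx
  have hset : {x : ℂ | Efun v x = 0} = Metric.sphere z₀ (1/|bv|) := by
    apply Set.image_injective.2 some_inj
    have h0 : OnePoint.some '' {x : ℂ | Efun v x = 0} = circSet v := by
      rw [circSet, if_neg hv1, Set.union_empty]
    rw [h0, hc]
  have hsph : Metric.sphere (v.2.1 / (v.1:ℂ)) (Real.sqrt (Qf v) / |v.1|)
      = Metric.sphere z₀ (1/|bv|) := by
    rw [← hset]
    ext x
    rw [Metric.mem_sphere, Set.mem_setOf_eq, Efun_recenter v hv1 x]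
    have hr1 : v.1 * Complex.normSq (x - v.2.1/(v.1:ℂ)) - Qf v / v.1
        = v.1 * (Complex.normSq (x - v.2.1/(v.1:ℂ)) - Qf v / v.1^2) := by
      field_simp
    rw [hr1, mul_eq_zero, or_iff_right hv1, sub_eq_zero]
    have hr2 : Qf v / v.1^2 = (Real.sqrt (Qf v) / |v.1|)^2 := by
      rw [div_pow, Real.sq_sqrt hQ.le, sq_abs]
    rw [hr2, dist_eq_iff_normSq (by positivity : (0:ℝ) ≤ Real.sqrt (Qf v) / |v.1|)]
  obtain ⟨hcen, hrad⟩ := sphere_eq_sphere (by positivity) hρ hsph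
  have hbv0 : |bv| ≠ 0 := abs_ne_zero.2 hbv
  have hv10 : |v.1| ≠ 0 := abs_ne_zero.2 hv1
  have habs : |v.1| = Real.sqrt (Qf v) * |bv| := by
    field_simp at hrad
    linarith
  have hv1sign : v.1 = Real.sqrt (Qf v) * bv := by
    rcases lt_or_gt_of_ne hbv with hneg | hpos
    · have hinf := hsign.2 hneg
      have hlt : v.1 < 0 := mem_regSet_infty.1 hinf
      rw [abs_of_neg hlt, abs_of_neg hneg] at habs
      linarith
    · have hinf := hsign.1 hpos
      have hge : ¬ v.1 < 0 := fun hlt => hinf (mem_regSet_infty.2 hlt)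
      push_neg at hge
      have hpos1 : 0 < v.1 := lt_of_le_of_ne hge (Ne.symm hv1)
      rw [abs_of_pos hpos1, abs_of_pos hpos] at habs
      linarith
  refine ⟨hv1sign, ?_⟩
  have hv1c : (v.1 : ℂ) ≠ 0 := Complex.ofReal_ne_zero.2 hv1
  rw [div_eq_iff hv1c] at hcen
  rw [hcen, hv1sign]
  push_cast
  ring

end SteinerAux

open SteinerAux

/-- **Theorem 1.2 via the rotating concentric model.** With `k ≥ 3` congruent tangent
circles of curvature `bb` centered at `A + r e^{i(2πj/k + θ)}` (`r sin(π/k) = 1/bb`) and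
a Möbius transformation `Ψ` sending the `j`-th circle of the `θ`-configuration to the
cooriented circle with center `z θ j ∈ ℂ` and signed curvature `b θ j`, all the mixed
moments `J_{m,n} = ∑_j (b θ j)^m (z θ j)^n`, `0 ≤ n ≤ m ≤ k - 1`, are independent
of `θ`. -/
theorem steiner_chain_mixed_moments_const
    (k : ℕ) (hk : 3 ≤ k) (A : ℂ) (r bb : ℝ) (hr : 0 < r) (hbb : 0 < bb)
    (htan : r * Real.sin (Real.pi / k) = 1 / bb)
    (ctr : ℝ → ℕ → ℂ)
    (hctr : ∀ θ j, ctr θ j = A + r * Complex.exp (Complex.I * (2 * Real.pi * j / k + θ)))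
    (Ψ : OnePoint ℂ → OnePoint ℂ) (hΨ : IsMobiusC Ψ)
    (b : ℝ → ℕ → ℝ) (z : ℝ → ℕ → ℂ) (hbne : ∀ θ j, b θ j ≠ 0)
    (himg : ∀ θ, ∀ j ∈ Finset.range k,
      Ψ '' (OnePoint.some '' Metric.sphere (ctr θ j) (1 / bb))
          = OnePoint.some '' Metric.sphere (z θ j) (1 / |b θ j|) ∧
        Ψ '' (OnePoint.some '' Metric.ball (ctr θ j) (1 / bb))
          = if 0 < b θ j then OnePoint.some '' Metric.ball (z θ j) (1 / |b θ j|)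
            else OnePoint.some '' (Metric.closedBall (z θ j) (1 / |b θ j|))ᶜ ∪ {∞}) :
    ∀ θ₁ θ₂ : ℝ, ∀ m n : ℕ, n ≤ m → m ≤ k - 1 →
      ∑ j ∈ Finset.range k, ((b θ₁ j : ℂ)) ^ m * (z θ₁ j) ^ n
        = ∑ j ∈ Finset.range k, ((b θ₂ j : ℂ)) ^ m * (z θ₂ j) ^ n := by
  intro θ₁ θ₂ m n hnm hmk
  have hk0 : 0 < k := by omega
  have hmk' : m < k := by omega
  obtain ⟨L, μ, hμ, hQL, hcL, hrL⟩ := good_mobius hΨ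
  have hbb0 : bb ≠ 0 := ne_of_gt hbb
  have hsμ0 : 0 < Real.sqrt μ := Real.sqrt_pos.2 hμ
  have hsmC : ((Real.sqrt μ : ℝ) : ℂ) ≠ 0 := Complex.ofReal_ne_zero.2 (ne_of_gt hsμ0)
  -- identification of image circle data
  have hid : ∀ θ : ℝ, ∀ j ∈ Finset.range k,
      (L (Vc bb (ctr θ j))).1 = Real.sqrt μ * b θ j ∧
      (L (Vc bb (ctr θ j))).2.1 = ((Real.sqrt μ * b θ j : ℝ) : ℂ) * z θ j := by
    intro θ j hj
    obtain ⟨h1, h2⟩ := himg θ j hj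
    have habs : (1:ℝ)/|bb| = 1/bb := by rw [abs_of_pos hbb]
    have hcirc : circSet (L (Vc bb (ctr θ j)))
        = OnePoint.some '' Metric.sphere (z θ j) (1/|b θ j|) := by
      rw [← hcL, circSet_Vc hbb0, habs]
      exact h1
    have hreg : regSet (L (Vc bb (ctr θ j)))
        = (if 0 < b θ j then OnePoint.some '' Metric.ball (z θ j) (1/|b θ j|)
           else OnePoint.some '' (Metric.closedBall (z θ j) (1/|b θ j|))ᶜ ∪ {∞}) := by
      rw [← hrL, regSet_Vc_pos hbb]
      exact h2
    have hQv : Qf (L (Vc bb (ctr θ j))) = μ := by rw [hQL, Qf_Vc hbb0, mul_one]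
    have hQpos : 0 < Qf (L (Vc bb (ctr θ j))) := by rw [hQv]; exact hμ
    have hsgn : (0 < b θ j → (∞ : OnePoint ℂ) ∉ regSet (L (Vc bb (ctr θ j)))) ∧
        (b θ j < 0 → (∞ : OnePoint ℂ) ∈ regSet (L (Vc bb (ctr θ j)))) := by
      constructor
      · intro hbpos hinf
        rw [hreg, if_pos hbpos] at hinf
        obtain ⟨x, _, hx⟩ := hinf
        exact some_ne_infty x hx
      · intro hbneg
        rw [hreg, if_neg (not_lt.2 hbneg.le)]
        exact Set.mem_union_right _ rfl
    obtain ⟨ha1, ha2⟩ := identify (hbne θ j) hQpos hcirc hsgn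
    rw [hQv] at ha1 ha2
    exact ⟨ha1, ha2⟩
  have hconst : ∃ c : ℂ, ∀ θ : ℝ,
      ∑ j ∈ Finset.range k, ((b θ j : ℂ)) ^ m * (z θ j) ^ n = c := by
    classical
    set P0 : Tri := (bb, (bb:ℂ) * A, bb * (Complex.normSq A + r^2) - 1/bb) with hP0
    set E1 : Tri := (0, ((bb*r : ℝ):ℂ), 2*bb*r*A.re) with hE1
    set E2 : Tri := (0, ((bb*r : ℝ):ℂ) * Complex.I, 2*bb*r*A.im) with hE2
    set a0 : ℂ := ((L P0).1 : ℂ) with ha0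
    set a1 : ℂ := ((L E1).1 : ℂ) with ha1'
    set a2 : ℂ := ((L E2).1 : ℂ) with ha2'
    set d0 : ℂ := (L P0).2.1 with hd0
    set d1 : ℂ := (L E1).2.1 with hd1
    set d2 : ℂ := (L E2).2.1 with hd2
    set Pol1 : Polynomial ℂ := Polynomial.C (a1/2 - a2/(2*Complex.I))
      + Polynomial.C a0 * Polynomial.X
      + Polynomial.C (a1/2 + a2/(2*Complex.I)) * Polynomial.X^2 with hPol1
    set Pol2 : Polynomial ℂ := Polynomial.C (d1/2 - d2/(2*Complex.I))
      + Polynomial.C d0 * Polynomial.X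
      + Polynomial.C (d1/2 + d2/(2*Complex.I)) * Polynomial.X^2 with hPol2
    set Pol : Polynomial ℂ := Pol1^(m-n) * Pol2^n with hPol
    have hdeg1 : Pol1.natDegree ≤ 2 := by rw [hPol1]; compute_degree
    have hdeg2 : Pol2.natDegree ≤ 2 := by rw [hPol2]; compute_degree
    have hdeg : Pol.natDegree < 2*m + 1 := by
      have hmul := Polynomial.natDegree_mul_le (p := Pol1^(m-n)) (q := Pol2^n)
      have hp1 := Polynomial.natDegree_pow_le (p := Pol1) (n := m-n)
      have hp2 := Polynomial.natDegree_pow_le (p := Pol2) (n := n)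
      have h1 : (m-n) * Pol1.natDegree ≤ (m-n) * 2 := Nat.mul_le_mul_left _ hdeg1
      have h2 : n * Pol2.natDegree ≤ n * 2 := Nat.mul_le_mul_left _ hdeg2
      rw [hPol]
      omega
    refine ⟨(1/((Real.sqrt μ : ℝ):ℂ)^m) * ((k:ℂ) * Pol.coeff m), fun θ => ?_⟩
    have hstep : ∀ j ∈ Finset.range k,
        ((b θ j : ℂ)) ^ m * (z θ j) ^ n
          = (1/((Real.sqrt μ : ℝ):ℂ)^m) *
            (Polynomial.eval (Complex.exp (Complex.I * (2 * Real.pi * j / k + θ))) Pol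
              * ((Complex.exp (Complex.I * (2 * Real.pi * j / k + θ)))⁻¹) ^ m) := by
      intro j hj
      set u : ℂ := Complex.exp (Complex.I * (2 * Real.pi * j / k + θ)) with hu
      have hxc : Complex.I * (2*(Real.pi:ℂ)*j/k + θ)
          = (((2*Real.pi*j/k + θ : ℝ)):ℂ) * Complex.I := by push_cast; ring
      have habs1 : ‖u‖ = 1 := by
        rw [hu, hxc, Complex.norm_exp_ofReal_mul_I]
      have hns : Complex.normSq u = 1 := by
        rw [← Complex.sq_norm, habs1]; norm_num
      have hns' : u.re^2 + u.im^2 = 1 := by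
        have := hns
        rw [Complex.normSq_apply] at this
        linear_combination this
      have hu0 : u ≠ 0 := Complex.exp_ne_zero _
      have hconj : (starRingEnd ℂ) u = u⁻¹ := by
        apply eq_inv_of_mul_eq_one_right
        rw [Complex.mul_conj, hns]
        norm_num
      have hre : (u.re : ℂ) = (u + u⁻¹)/2 := by
        rw [← hconj, Complex.add_conj]
        push_cast
        ring
      have him : (u.im : ℂ) = (u - u⁻¹)/(2*Complex.I) := by
        rw [← hconj, Complex.sub_conj]
        push_cast
        field_simp
      have hdecomp : Vc bb (A + (r:ℂ) * u) = P0 + u.re • E1 + u.im • E2 := by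
        rw [hP0, hE1, hE2]
        refine Prod.ext ?_ (Prod.ext ?_ ?_)
        · simp [Vc, Prod.fst_add, Prod.smul_fst, smul_eq_mul]
        · show (bb:ℂ) * (A + (r:ℂ) * u) = _
          simp only [Prod.snd_add, Prod.fst_add, Prod.smul_snd, Prod.smul_fst,
            Complex.real_smul]
          push_cast
          linear_combination (-(bb:ℂ)*(r:ℂ)) * (Complex.re_add_im u)
        · show bb * Complex.normSq (A + (r:ℂ) * u) - 1/bb = _
          simp only [Prod.snd_add, Prod.smul_snd, smul_eq_mul]
          rw [Complex.normSq_apply]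
          simp only [Complex.add_re, Complex.add_im, Complex.mul_re, Complex.mul_im,
            Complex.ofReal_re, Complex.ofReal_im]
          have hA : Complex.normSq A = A.re^2 + A.im^2 := by
            rw [Complex.normSq_apply]; ring
          linear_combination (bb*r^2) * hns' - bb * hA
      have hlin : L (Vc bb (A + (r:ℂ) * u)) = L P0 + u.re • L E1 + u.im • L E2 := by
        rw [hdecomp, map_add, map_add, _root_.map_smul, _root_.map_smul]
      have hctr' : ctr θ j = A + (r:ℂ) * u := by rw [hctr θ j, hu]
      have hF1 : ((L (Vc bb (ctr θ j))).1 : ℂ) = a0 + (u.re:ℂ) * a1 + (u.im:ℂ) * a2 := by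
        rw [hctr', hlin, ha0, ha1', ha2']
        simp only [Prod.fst_add, Prod.smul_fst, smul_eq_mul]
        push_cast
        ring
      have hF2 : (L (Vc bb (ctr θ j))).2.1 = d0 + (u.re:ℂ) * d1 + (u.im:ℂ) * d2 := by
        rw [hctr', hlin, hd0, hd1, hd2]
        simp only [Prod.snd_add, Prod.fst_add, Prod.smul_snd, Prod.smul_fst,
          Complex.real_smul]
      have hev1 : Polynomial.eval u Pol1 = u * ((L (Vc bb (ctr θ j))).1 : ℂ) := by
        rw [hF1, hre, him, hPol1]
        simp only [Polynomial.eval_add, Polynomial.eval_mul, Polynomial.eval_pow,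
          Polynomial.eval_C, Polynomial.eval_X]
        field_simp
        ring
      have hev2 : Polynomial.eval u Pol2 = u * (L (Vc bb (ctr θ j))).2.1 := by
        rw [hF2, hre, him, hPol2]
        simp only [Polynomial.eval_add, Polynomial.eval_mul, Polynomial.eval_pow,
          Polynomial.eval_C, Polynomial.eval_X]
        field_simp
        ring
      obtain ⟨hb1, hb2⟩ := hid θ j hj
      have hPolEval : Polynomial.eval u Pol
          = (u * (((L (Vc bb (ctr θ j))).1 : ℂ)))^(m-n)
            * (u * ((L (Vc bb (ctr θ j))).2.1))^n := by
        rw [hPol, Polynomial.eval_mul, Polynomial.eval_pow, Polynomial.eval_pow,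
          hev1, hev2]
      have hbC : ((b θ j : ℂ)) = ((L (Vc bb (ctr θ j))).1 : ℂ) / ((Real.sqrt μ : ℝ):ℂ) := by
        rw [hb1]
        push_cast
        field_simp
      have hbzC : ((b θ j : ℂ)) * z θ j
          = (L (Vc bb (ctr θ j))).2.1 / ((Real.sqrt μ : ℝ):ℂ) := by
        rw [hb2]
        push_cast
        field_simp
      have hsplit : ((b θ j : ℂ)) ^ m * (z θ j) ^ n
          = ((b θ j : ℂ))^(m-n) * (((b θ j : ℂ)) * z θ j)^n := by
        rw [mul_pow, ← mul_assoc, ← pow_add, Nat.sub_add_cancel hnm]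
      have hfin : ((b θ j : ℂ)) ^ m * (z θ j) ^ n
          = ((((L (Vc bb (ctr θ j))).1 : ℂ))^(m-n) * ((L (Vc bb (ctr θ j))).2.1)^n)
            / ((Real.sqrt μ : ℝ):ℂ)^m := by
        rw [hsplit, hbzC, hbC, div_pow, div_pow, div_mul_div_comm, ← pow_add,
          Nat.sub_add_cancel hnm]
      rw [hfin, hPolEval, mul_pow, mul_pow]
      have hcan : u^(m-n) * u^n * (u⁻¹)^m = 1 := by
        rw [← pow_add, Nat.sub_add_cancel hnm, ← mul_pow, mul_inv_cancel₀ hu0, one_pow]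
      linear_combination (-((((L (Vc bb (ctr θ j))).1 : ℂ))^(m-n)
        * ((L (Vc bb (ctr θ j))).2.1)^n) / ((Real.sqrt μ : ℝ):ℂ)^m) * hcan
    rw [Finset.sum_congr rfl hstep, ← Finset.mul_sum, key_sum hk0 hmk' Pol hdeg θ]
  obtain ⟨c, hc⟩ := hconst
  rw [hc θ₁, hc θ₂]
end

section
/- Let w, z1, z2, z3 ∈ ℂ be the centers and a, b1, b2, b3 ∈ ℝ the signed curvatures of four mutually tangent cooriented circles in the plane. Then (a w + b1 z1 + b2 z2 + b3 z3)^2 = 2 (a^2 w^2 + b1^2 z1^2 + b2^2 z2^2 + b3^2 z3^2). -/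
open Matrix

/-- **Complex Descartes Theorem** (Lagarias–Mallows–Wilks). Let `z i ∈ ℂ` be the centers
and `b i ∈ ℝ` the nonzero signed curvatures of four mutually tangent cooriented circles
in the plane (tangency with opposite coorientations of circles of radii `1/|b i|` is
encoded by `|z i - z j|² = (1/b i + 1/b j)²`).  Then
`(∑ b i z i)² = 2 ∑ (b i)² (z i)²`. -/
theorem complex_descartes (z : Fin 4 → ℂ) (b : Fin 4 → ℝ) (hb : ∀ i, b i ≠ 0)
    (htangent : ∀ i j, i ≠ j →
      (‖z i - z j‖) ^ 2 = (1 / b i + 1 / b j) ^ 2) :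
    (∑ i, (b i : ℂ) * z i) ^ 2 = 2 * ∑ i, ((b i : ℂ)) ^ 2 * (z i) ^ 2 := by
  set c : Fin 4 → ℂ := fun i => (b i : ℂ) with hc
  have hc0 : ∀ i, c i ≠ 0 := fun i => Complex.ofReal_ne_zero.mpr (hb i)
  set w : Fin 4 → ℂ := fun i => (starRingEnd ℂ) (z i) with hw
  -- cleared-denominator form of the tangency conditions
  have hE : ∀ i j, i ≠ j →
      (c i * c j) ^ 2 * ((z i - z j) * (w i - w j)) = (c i + c j) ^ 2 := by
    intro i j hij
    have h3 : (z i - z j) * (w i - w j) = (1 / c i + 1 / c j) ^ 2 := by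
      calc (z i - z j) * (w i - w j)
          = (z i - z j) * (starRingEnd ℂ) (z i - z j) := by simp [hw, map_sub]
        _ = (((‖z i - z j‖) ^ 2 : ℝ) : ℂ) := by
            rw [Complex.mul_conj, Complex.sq_norm]
        _ = (((1 / b i + 1 / b j : ℝ)) : ℂ) ^ 2 := by rw [htangent i j hij]; push_cast; ring
        _ = (1 / c i + 1 / c j) ^ 2 := by push_cast [hc]; ring
    have hi := hc0 i
    have hj := hc0 j
    field_simp at h3
    linear_combination h3
  -- the Lagarias–Mallows–Wilks matrix argument
  set W : Matrix (Fin 4) (Fin 4) ℂ :=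
    Matrix.of fun i => ![c i * (z i * w i) - (c i)⁻¹, c i, c i * z i, c i * w i] with hWdef
  set R : Matrix (Fin 4) (Fin 4) ℂ :=
    !![0,1,0,0; 1,0,0,0; 0,0,0,-1; 0,0,-1,0] with hRdef
  set S : Matrix (Fin 4) (Fin 4) ℂ :=
    !![-2,2,2,2; 2,-2,2,2; 2,2,-2,2; 2,2,2,-2] with hSdef
  set T : Matrix (Fin 4) (Fin 4) ℂ :=
    !![-1/8,1/8,1/8,1/8; 1/8,-1/8,1/8,1/8; 1/8,1/8,-1/8,1/8; 1/8,1/8,1/8,-1/8] with hTdef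
  have hRR : R * R = 1 := by
    ext i j
    fin_cases i <;> fin_cases j <;>
      simp [hRdef, Matrix.mul_apply, Fin.sum_univ_four, Matrix.one_apply,
        Matrix.vecHead, Matrix.vecTail]
  have hST : S * T = 1 := by
    ext i j
    fin_cases i <;> fin_cases j <;>
      simp [hSdef, hTdef, Matrix.mul_apply, Fin.sum_univ_four, Matrix.one_apply,
        Matrix.vecHead, Matrix.vecTail] <;> norm_num
  have hWRW : W * R * Wᵀ = S := by
    have e : ∀ (i j : Fin 4), i ≠ j →
        (c i * (z i * w i) - (c i)⁻¹) * c j + c i * (c j * (z j * w j) - (c j)⁻¹)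
          - c i * z i * (c j * w j) - c i * w i * (c j * z j) = 2 := by
      intro i j hij
      have hi := hc0 i; have hj := hc0 j
      field_simp
      linear_combination hE i j hij
    have d : ∀ i : Fin 4,
        (c i * (z i * w i) - (c i)⁻¹) * c i + c i * (c i * (z i * w i) - (c i)⁻¹)
          - c i * z i * (c i * w i) - c i * w i * (c i * z i) = -2 := by
      intro i
      have hi := hc0 i
      field_simp
      ring
    ext i j
    simp [hWdef, hRdef, hSdef, Matrix.mul_apply, Fin.sum_univ_four,
      Matrix.vecHead, Matrix.vecTail]
    fin_cases i <;> fin_cases j <;>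
      simp [Matrix.vecHead, Matrix.vecTail]
    · linear_combination d 0
    · linear_combination e 0 1 (by decide)
    · linear_combination e 0 2 (by decide)
    · linear_combination e 0 3 (by decide)
    · linear_combination e 1 0 (by decide)
    · linear_combination d 1
    · linear_combination e 1 2 (by decide)
    · linear_combination e 1 3 (by decide)
    · linear_combination e 2 0 (by decide)
    · linear_combination e 2 1 (by decide)
    · linear_combination d 2
    · linear_combination e 2 3 (by decide)
    · linear_combination e 3 0 (by decide)
    · linear_combination e 3 1 (by decide)
    · linear_combination e 3 2 (by decide)
    · linear_combination d 3
  -- deduce `Wᵀ * T * W = R`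
  have h1 : W * (R * Wᵀ * T) = 1 := by
    calc W * (R * Wᵀ * T) = (W * R * Wᵀ) * T := by
          simp only [Matrix.mul_assoc]
      _ = 1 := by rw [hWRW, hST]
  have h2 : (R * Wᵀ * T) * W = 1 := mul_eq_one_comm.mp h1
  have hkey : Wᵀ * T * W = R := by
    calc Wᵀ * T * W = (R * R) * (Wᵀ * T * W) := by rw [hRR, one_mul]
      _ = R * ((R * Wᵀ * T) * W) := by simp only [Matrix.mul_assoc]
      _ = R := by rw [h2, mul_one]
  -- read off the (2,2) entry
  have h22 := congrFun (congrFun hkey 2) 2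
  simp [hWdef, hRdef, hTdef, Matrix.mul_apply, Matrix.transpose_apply,
    Fin.sum_univ_four, Matrix.vecHead, Matrix.vecTail] at h22
  rw [Fin.sum_univ_four, Fin.sum_univ_four]
  linear_combination 8 * h22
end

section
/- Fix A ∈ ℂ, r > 0, and b̄ > 0 with r sin(π/k) = 1/b̄, so that the k circles of curvature b̄ centered at A + r e^{i(2πj/k + θ)}, j = 0,…,k-1, form a rotating family of chains of consecutively tangent congruent circles. Let C ∈ ℂ with |A + r e^{iφ} - C| ≠ 1/b̄ for all φ, and let b_j(θ) be the curvatures of the images of these circles under inversion in the unit circle centered at C. Then for every m with 1 ≤ m ≤ k-1, (1/k) ∑_{j=0}^{k-1} b_j(θ)^m = (1/2π) ∫_0^{2π} (b̄ |A + r e^{iφ} - C|^2 - 1/b̄)^m dφ, independent of θ. -/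
open Real intervalIntegral

private lemma steiner_avg_int (n : ℤ) :
    ∫ φ in (0:ℝ)..(2 * Real.pi), Complex.exp (Complex.I * n * φ) =
      if n = 0 then (2 * Real.pi : ℂ) else 0 := by
  rcases eq_or_ne n 0 with h | h
  · simp [h]
  · have hc : (Complex.I * n) ≠ 0 := by
      simp [Complex.I_ne_zero, Complex.ext_iff, h]
    rw [if_neg h]
    rw [integral_exp_mul_complex hc]
    have h1 : Complex.exp (Complex.I * n * (2 * Real.pi : ℝ)) = 1 := by
      have := Complex.exp_int_mul_two_pi_mul_I n
      rw [← this]; push_cast; ring_nf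
    rw [show ((0:ℝ):ℂ) = 0 by norm_num, mul_zero, Complex.exp_zero, h1, sub_self, zero_div]

private lemma steiner_avg_disc (k : ℕ) (hk : 0 < k) (n : ℤ) (hn : n.natAbs < k) (θ : ℝ) :
    ∑ j ∈ Finset.range k, Complex.exp (Complex.I * n * ((2 * Real.pi * j / k + θ : ℝ) : ℂ)) =
      if n = 0 then (k : ℂ) else 0 := by
  rcases eq_or_ne n 0 with h | h
  · simp [h]
  · rw [if_neg h]
    have hprim := Complex.isPrimitiveRoot_exp k hk.ne'
    set ζ0 : ℂ := Complex.exp (2 * Real.pi * Complex.I / k) with hζ0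
    set ζ : ℂ := ζ0 ^ n with hζ
    have hζ1 : ζ ≠ 1 := by
      rw [hζ, Ne, hprim.zpow_eq_one_iff_dvd]
      intro hd
      have h3 : k ∣ n.natAbs := by
        have := Int.natAbs_dvd_natAbs.mpr hd
        simpa using this
      have := Nat.le_of_dvd (Int.natAbs_pos.mpr h) h3
      omega
    have hpt : ∀ j : ℕ, Complex.exp (Complex.I * n * ((2 * Real.pi * j / k + θ : ℝ) : ℂ))
        = Complex.exp (Complex.I * n * θ) * ζ ^ j := by
      intro j
      have e1 : ζ ^ j = Complex.exp (((n * j : ℤ)) * (2 * Real.pi * Complex.I / k)) := by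
        rw [Complex.exp_int_mul, hζ, hζ0, ← zpow_natCast (ζ0 ^ n) j, ← zpow_mul]
      rw [e1, ← Complex.exp_add]
      congr 1
      have hk0 : (k:ℂ) ≠ 0 := Nat.cast_ne_zero.mpr hk.ne'
      push_cast
      field_simp
      ring
    simp_rw [hpt, ← Finset.mul_sum]
    have hgeo : ∑ j ∈ Finset.range k, ζ ^ j = 0 := by
      rw [geom_sum_eq hζ1]
      have hζk : ζ ^ k = 1 := by
        rw [hζ, ← zpow_natCast (ζ0 ^ n) k, ← zpow_mul, mul_comm, zpow_mul, zpow_natCast,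
          hprim.pow_eq_one, one_zpow]
      rw [hζk, sub_self, zero_div]
    rw [hgeo, mul_zero]

private lemma steiner_pow_expand (α β : ℂ) (m : ℕ) (φ : ℝ) :
    (α + β * Complex.exp (Complex.I * φ)
        + (starRingEnd ℂ) β * Complex.exp (-(Complex.I * φ))) ^ m
      = ∑ j ∈ Finset.range (m+1), ∑ i ∈ Finset.range (j+1),
          (m.choose j : ℂ) * (j.choose i : ℂ) * α ^ (m-j) * β ^ i * ((starRingEnd ℂ) β) ^ (j-i)
            * Complex.exp (Complex.I * ((2*(i:ℤ) - (j:ℤ) : ℤ) : ℂ) * φ) := by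
  rw [show α + β * Complex.exp (Complex.I * φ)
        + (starRingEnd ℂ) β * Complex.exp (-(Complex.I * φ))
      = (β * Complex.exp (Complex.I * φ)
        + (starRingEnd ℂ) β * Complex.exp (-(Complex.I * φ))) + α from by ring,
    add_pow]
  refine Finset.sum_congr rfl fun j hj => ?_
  rw [add_pow, Finset.sum_mul, Finset.sum_mul]
  refine Finset.sum_congr rfl fun i hi => ?_
  have hile : i ≤ j := by simpa [Nat.lt_succ_iff] using Finset.mem_range.mp hi
  have hE : Complex.exp (Complex.I * φ) ^ i * Complex.exp (-(Complex.I * φ)) ^ (j - i)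
      = Complex.exp (Complex.I * ((2*(i:ℤ) - (j:ℤ) : ℤ) : ℂ) * φ) := by
    rw [← Complex.exp_nat_mul, ← Complex.exp_nat_mul, ← Complex.exp_add]
    congr 1
    push_cast [Nat.cast_sub hile]
    ring
  rw [mul_pow, mul_pow]
  linear_combination ((m.choose j : ℂ) * (j.choose i : ℂ) * α ^ (m-j) * β ^ i
    * ((starRingEnd ℂ) β) ^ (j-i)) * hE

private lemma steiner_key (A C : ℂ) (r bb : ℝ) (φ : ℝ) :
    ((bb * (‖A + r * Complex.exp (Complex.I * φ) - C‖) ^ 2 - 1 / bb : ℝ) : ℂ)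
      = ((bb:ℂ) * ((A - C) * (starRingEnd ℂ) (A - C) + (r:ℂ)^2) - 1/(bb:ℂ))
        + ((bb:ℂ) * (r:ℂ) * (starRingEnd ℂ) (A - C)) * Complex.exp (Complex.I * φ)
        + (starRingEnd ℂ) ((bb:ℂ) * (r:ℂ) * (starRingEnd ℂ) (A - C))
            * Complex.exp (-(Complex.I * φ)) := by
  have hconjE : (starRingEnd ℂ) (Complex.exp (Complex.I * φ)) = Complex.exp (-(Complex.I * φ)) := by
    rw [← Complex.exp_conj, map_mul, Complex.conj_I, Complex.conj_ofReal, neg_mul]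
  have hEE : Complex.exp (Complex.I * φ) * Complex.exp (-(Complex.I * φ)) = 1 := by
    rw [← Complex.exp_add, add_neg_cancel, Complex.exp_zero]
  set z : ℂ := A + r * Complex.exp (Complex.I * φ) - C with hz
  have h0 : ((‖z‖ : ℝ) : ℂ) ^ 2 = z * (starRingEnd ℂ) z := by
    rw [Complex.mul_conj, Complex.normSq_eq_norm_sq]
    push_cast
    ring
  have hzc : (starRingEnd ℂ) z = (starRingEnd ℂ) (A - C) + r * Complex.exp (-(Complex.I * φ)) := by
    rw [hz]
    simp only [map_add, map_sub, map_mul, Complex.conj_ofReal, hconjE]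
    ring
  push_cast
  rw [h0, hzc]
  simp only [map_mul, Complex.conj_ofReal, Complex.conj_conj]
  rw [hz]
  linear_combination (bb:ℂ) * (r:ℂ)^2 * hEE

/-- **Planar design argument for Steiner chains.** Let the `k` circles of curvature
`bb` centered at `A + r e^{i(2πj/k + θ)}` form a rotating family of chains of
consecutively tangent congruent circles (`r sin(π/k) = 1/bb`), none of them passing
through `C` after translation (`|A + r e^{iφ} - C| ≠ 1/bb` for all `φ`).  Then the
average of the `m`-th powers of the curvatures `b_j(θ) = bb |A + r e^{i(2πj/k+θ)} - C|²
- 1/bb` of the images of these circles under inversion in the unit circle centered at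
`C` equals, for `1 ≤ m ≤ k - 1`, the circle average
`(1/2π) ∫₀^{2π} (bb |A + r e^{iφ} - C|² - 1/bb)^m dφ`; in particular it is independent
of `θ`. -/
theorem steiner_chain_inversion_curvature_average
    (k : ℕ) (hk : 3 ≤ k) (A C : ℂ) (r bb : ℝ) (hr : 0 < r) (hbb : 0 < bb)
    (htan : r * Real.sin (Real.pi / k) = 1 / bb)
    (hreg : ∀ φ : ℝ, ‖A + r * Complex.exp (Complex.I * φ) - C‖ ≠ 1 / bb)
    (b : ℝ → ℕ → ℝ)
    (hb : ∀ θ j, b θ j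
      = bb * (‖A + r * Complex.exp (Complex.I * (2 * Real.pi * j / k + θ)) - C‖) ^ 2
        - 1 / bb)
    (m : ℕ) (hm1 : 1 ≤ m) (hm2 : m ≤ k - 1) (θ : ℝ) :
    (1 / (k : ℝ)) * ∑ j ∈ Finset.range k, (b θ j) ^ m
      = (1 / (2 * Real.pi)) *
          ∫ φ in (0:ℝ)..(2 * Real.pi),
            (bb * (‖A + r * Complex.exp (Complex.I * φ) - C‖) ^ 2 - 1 / bb) ^ m := by
  have hk0 : 0 < k := by omega
  have hkC : (k:ℂ) ≠ 0 := Nat.cast_ne_zero.mpr (by omega)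
  have hπ : (Real.pi:ℝ) ≠ 0 := Real.pi_ne_zero
  set α : ℂ := (bb:ℂ) * ((A - C) * (starRingEnd ℂ) (A - C) + (r:ℝ)^2) - 1/(bb:ℂ) with hα
  set β : ℂ := (bb:ℂ) * (r:ℂ) * (starRingEnd ℂ) (A - C) with hβ
  have key : ∀ φ : ℝ,
      ((bb * (‖A + r * Complex.exp (Complex.I * φ) - C‖) ^ 2 - 1 / bb : ℝ) : ℂ)
        = α + β * Complex.exp (Complex.I * φ)
          + (starRingEnd ℂ) β * Complex.exp (-(Complex.I * φ)) :=
    fun φ => steiner_key A C r bb φ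
  have hnabs : ∀ j i : ℕ, j ≤ m → i ≤ j → (2*(i:ℤ) - (j:ℤ)).natAbs < k := by
    intro j i hjm hij
    omega
  -- the common value
  have hbC : ∀ j' : ℕ, ((b θ j' : ℝ) : ℂ)
      = α + β * Complex.exp (Complex.I * ((2 * Real.pi * j' / k + θ : ℝ) : ℂ))
        + (starRingEnd ℂ) β * Complex.exp (-(Complex.I * ((2 * Real.pi * j' / k + θ : ℝ) : ℂ))) := by
    intro j'
    have harg : Complex.I * (2 * (Real.pi:ℂ) * (j':ℂ) / (k:ℂ) + (θ:ℂ))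
        = Complex.I * ((2 * Real.pi * (j':ℝ) / k + θ : ℝ) : ℂ) := by
      push_cast; ring
    rw [hb, ← key (2 * Real.pi * j' / k + θ)]
    norm_num [harg]
  have hdisc : (((1 / (k:ℝ)) * ∑ j ∈ Finset.range k, (b θ j) ^ m : ℝ) : ℂ)
      = ∑ j ∈ Finset.range (m+1), ∑ i ∈ Finset.range (j+1),
          (m.choose j : ℂ) * (j.choose i : ℂ) * α ^ (m-j) * β ^ i * ((starRingEnd ℂ) β) ^ (j-i)
            * (if (2*(i:ℤ) - (j:ℤ) : ℤ) = 0 then (1:ℂ) else 0) := by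
    push_cast
    simp_rw [hbC, steiner_pow_expand]
    rw [Finset.sum_comm, Finset.mul_sum]
    refine Finset.sum_congr rfl fun j hj => ?_
    rw [Finset.sum_comm, Finset.mul_sum]
    refine Finset.sum_congr rfl fun i hi => ?_
    rw [← Finset.mul_sum, ← mul_assoc, steiner_avg_disc k hk0 _
      (hnabs j i (by simpa [Nat.lt_succ_iff] using Finset.mem_range.mp hj)
        (by simpa [Nat.lt_succ_iff] using Finset.mem_range.mp hi)) θ]
    rcases eq_or_ne (2*(i:ℤ) - (j:ℤ)) 0 with h | h
    · rw [if_pos h, if_pos h]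
      field_simp
    · rw [if_neg h, if_neg h]
      ring
  have hint : (((1 / (2 * Real.pi)) * ∫ φ in (0:ℝ)..(2 * Real.pi),
        (bb * (‖A + r * Complex.exp (Complex.I * φ) - C‖) ^ 2 - 1 / bb) ^ m : ℝ) : ℂ)
      = ∑ j ∈ Finset.range (m+1), ∑ i ∈ Finset.range (j+1),
          (m.choose j : ℂ) * (j.choose i : ℂ) * α ^ (m-j) * β ^ i * ((starRingEnd ℂ) β) ^ (j-i)
            * (if (2*(i:ℤ) - (j:ℤ) : ℤ) = 0 then (1:ℂ) else 0) := by
    rw [Complex.ofReal_mul, ← intervalIntegral.integral_ofReal]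
    simp_rw [Complex.ofReal_pow, key, steiner_pow_expand]
    rw [intervalIntegral.integral_finset_sum]
    · have hswap : ∀ j ∈ Finset.range (m+1),
          (∫ φ in (0:ℝ)..(2 * Real.pi), ∑ i ∈ Finset.range (j+1),
            (m.choose j : ℂ) * (j.choose i : ℂ) * α ^ (m-j) * β ^ i * ((starRingEnd ℂ) β) ^ (j-i)
              * Complex.exp (Complex.I * ((2*(i:ℤ) - (j:ℤ) : ℤ) : ℂ) * φ))
          = ∑ i ∈ Finset.range (j+1),
            (m.choose j : ℂ) * (j.choose i : ℂ) * α ^ (m-j) * β ^ i * ((starRingEnd ℂ) β) ^ (j-i)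
              * (if (2*(i:ℤ) - (j:ℤ) : ℤ) = 0 then (2 * Real.pi : ℂ) else 0) := by
        intro j hj
        rw [intervalIntegral.integral_finset_sum]
        · refine Finset.sum_congr rfl fun i hi => ?_
          rw [intervalIntegral.integral_const_mul, steiner_avg_int]
        · intro i hi
          apply Continuous.intervalIntegrable
          fun_prop
      rw [Finset.sum_congr rfl hswap, Finset.mul_sum]
      refine Finset.sum_congr rfl fun j hj => ?_
      rw [Finset.mul_sum]
      refine Finset.sum_congr rfl fun i hi => ?_
      rcases eq_or_ne (2*(i:ℤ) - (j:ℤ)) 0 with h | h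
      · rw [if_pos h, if_pos h]
        have : (2 * (Real.pi:ℂ)) ≠ 0 := by
          simp [Complex.ofReal_ne_zero, hπ]
        push_cast
        field_simp
      · rw [if_neg h, if_neg h]
        ring
    · intro j hj
      apply Continuous.intervalIntegrable
      fun_prop
  exact_mod_cast hdisc.trans hint.symm
end
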